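/- arXiv:1006.0326 — 7 statements merged into one kernel-verified Lean document; each statement's English description precedes it below -/
import Mathlib

section
/- For all nonnegative integers n and m, the sum over j ≥ 0 with j ≠ n and j ≠ m of 1/(⟨j-n⟩² ⟨j-m⟩) is at most K/⟨m-n⟩, where K = 3 + 2ζ(2) and ⟨a⟩ := max(1, |a|). -/
open Real

/-- `⟨a⟩ := max (1, |a|)` for an integer `a`, as a real number. -/
noncomputable def jap (a : ℤ) : ℝ := max 1 |(a : ℝ)|

lemma jap_eq_natAbs (a : ℤ) (h : a ≠ 0) : jap a = (a.natAbs : ℝ) := by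
  have h1 : (1:ℝ) ≤ |(a:ℝ)| := by
    rw [← Int.cast_abs]
    exact_mod_cast Int.one_le_abs h
  rw [jap, max_eq_right h1, ← Int.cast_abs, Int.abs_eq_natAbs, Int.cast_natCast]

lemma sq_cast_eq (j n : ℕ) : ((j:ℝ)-n)^2 = ((((j:ℤ)-n).natAbs : ℕ) : ℝ)^2 := by
  have h : ((j:ℝ) - n) = ((((j:ℤ)-n) : ℤ) : ℝ) := by push_cast; ring
  rw [h, ← sq_abs ((((j:ℤ)-n : ℤ)):ℝ), ← Int.cast_abs, Int.abs_eq_natAbs, Int.cast_natCast]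

/-- Sum of inverse squares over distinct naturals avoiding `n`, shifted. -/
lemma sum_inv_sq (n : ℕ) (t : Finset ℕ) (ht : ∀ j ∈ t, j ≠ n) :
    ∑ j ∈ t, 1/((j:ℝ)-n)^2 ≤ π^2/3 := by
  classical
  have hsplit : t = (t.filter (· < n)) ∪ (t.filter (n < ·)) := by
    ext j; simp only [Finset.mem_union, Finset.mem_filter]
    constructor
    · intro hj; rcases lt_or_gt_of_ne (ht j hj) with h|h
      · exact Or.inl ⟨hj, h⟩
      · exact Or.inr ⟨hj, h⟩
    · rintro (⟨hj,_⟩|⟨hj,_⟩) <;> exact hj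
  have hdisj : Disjoint (t.filter (· < n)) (t.filter (n < ·)) := by
    rw [Finset.disjoint_left]
    intro j h1 h2
    simp only [Finset.mem_filter] at h1 h2
    omega
  rw [hsplit, Finset.sum_union hdisj]
  have key : ∀ (u : Finset ℕ), (∀ j ∈ u, ((j:ℝ)-n)^2 = ((if j < n then n - j else j - n : ℕ):ℝ)^2 ∧ (if j < n then n - j else j - n : ℕ) ≠ 0) → True := fun _ _ => trivial
  -- bound each part by π^2/6
  have hb : ∀ (u : Finset ℕ) (f : ℕ → ℕ), (Set.InjOn f u) →
      (∀ j ∈ u, ((j:ℝ)-n)^2 = ((f j : ℝ))^2 ∧ f j ≠ 0) →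
      ∑ j ∈ u, 1/((j:ℝ)-n)^2 ≤ π^2/6 := by
    intro u f hinj hf
    have : ∑ j ∈ u, 1/((j:ℝ)-n)^2 = ∑ k ∈ u.image f, 1/(k:ℝ)^2 := by
      rw [Finset.sum_image (fun a ha b hb hab => hinj ha hb hab)]
      exact Finset.sum_congr rfl fun j hj => by rw [(hf j hj).1]
    rw [this]
    exact sum_le_hasSum _ (fun k _ => by positivity) hasSum_zeta_two
  have h1 : ∑ j ∈ t.filter (· < n), 1/((j:ℝ)-n)^2 ≤ π^2/6 := by
    apply hb _ (fun j => n - j)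
    · intro a ha b hb hab
      simp only [Finset.coe_filter, Set.mem_setOf_eq] at ha hb
      dsimp only at hab
      omega
    · intro j hj
      simp only [Finset.mem_filter] at hj
      constructor
      · have : ((n - j : ℕ):ℝ) = (n:ℝ) - j := by
          have := hj.2; push_cast [Nat.cast_sub this.le]; ring
        rw [this]; ring
      · omega
  have h2 : ∑ j ∈ t.filter (n < ·), 1/((j:ℝ)-n)^2 ≤ π^2/6 := by
    apply hb _ (fun j => j - n)
    · intro a ha b hb hab
      simp only [Finset.coe_filter, Set.mem_setOf_eq] at ha hb
      dsimp only at hab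
      omega
    · intro j hj
      simp only [Finset.mem_filter] at hj
      constructor
      · have : ((j - n : ℕ):ℝ) = (j:ℝ) - n := by
          have := hj.2; push_cast [Nat.cast_sub this.le]; ring
        rw [this]
      · omega
  linarith

/-- harmonic sum bound -/
lemma harmonic_le (d : ℕ) : ∑ b ∈ Finset.Ico 1 d, (1:ℝ)/b ≤ d/2 := by
  induction d with
  | zero => simp
  | succ d ih =>
    rcases Nat.eq_zero_or_pos d with rfl|hd
    · simp
    rw [Finset.sum_Ico_succ_top hd]
    rcases eq_or_lt_of_le (Nat.succ_le_of_lt hd) with h1|h2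
    · rw [← h1]; norm_num
    have hd2 : (2:ℕ) ≤ d := h2
    have : (1:ℝ)/d ≤ 1/2 := by
      apply one_div_le_one_div_of_le (by norm_num)
      exact_mod_cast hd2
    push_cast
    linarith

/-- the auxiliary function -/
noncomputable def F0 (d b : ℕ) : ℝ :=
  if 1 ≤ b ∧ b < d then (1/(d:ℝ)) * (1/(b:ℝ) + 1/((d-b : ℕ):ℝ)) else 0

lemma F0_nonneg (d b : ℕ) : 0 ≤ F0 d b := by
  rw [F0]; split <;> positivity

lemma sum_F0_le (d : ℕ) (hd : 1 ≤ d) (t : Finset ℕ) : ∑ b ∈ t, F0 d b ≤ 1 := by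
  classical
  have hsub : ∑ b ∈ t, F0 d b ≤ ∑ b ∈ Finset.Ico 1 d, F0 d b := by
    rw [← Finset.sum_filter_add_sum_filter_not t (· ∈ Finset.Ico 1 d)]
    have hz : ∑ b ∈ t.filter (· ∉ Finset.Ico 1 d), F0 d b = 0 := by
      apply Finset.sum_eq_zero
      intro b hb
      simp only [Finset.mem_filter, Finset.mem_Ico] at hb
      rw [F0, if_neg]; omega
    rw [hz, add_zero]
    apply Finset.sum_le_sum_of_subset_of_nonneg
    · intro b hb; simp only [Finset.mem_filter] at hb; exact hb.2
    · intro b _ _; exact F0_nonneg d b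
  have heval : ∑ b ∈ Finset.Ico 1 d, F0 d b
      = (1/(d:ℝ)) * (∑ b ∈ Finset.Ico 1 d, 1/(b:ℝ) + ∑ b ∈ Finset.Ico 1 d, 1/((d-b:ℕ):ℝ)) := by
    rw [mul_add, Finset.mul_sum, Finset.mul_sum, ← Finset.sum_add_distrib]
    apply Finset.sum_congr rfl
    intro b hb
    simp only [Finset.mem_Ico] at hb
    rw [F0, if_pos ⟨hb.1, hb.2⟩]; ring
  have hrefl : ∑ b ∈ Finset.Ico 1 d, 1/((d-b:ℕ):ℝ) = ∑ b ∈ Finset.Ico 1 d, 1/(b:ℝ) := by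
    apply Finset.sum_nbij' (fun b => d - b) (fun b => d - b)
    · intro a ha; simp only [Finset.mem_Ico] at *; omega
    · intro a ha; simp only [Finset.mem_Ico] at *; omega
    · intro a ha; simp only [Finset.mem_Ico] at ha; omega
    · intro a ha; simp only [Finset.mem_Ico] at ha; omega
    · intro a ha; rfl
  have hH := harmonic_le d
  have hdpos : (0:ℝ) < d := by exact_mod_cast hd
  calc ∑ b ∈ t, F0 d b ≤ (1/(d:ℝ)) * (∑ b ∈ Finset.Ico 1 d, 1/(b:ℝ) + ∑ b ∈ Finset.Ico 1 d, 1/((d-b:ℕ):ℝ)) := by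
        rw [← heval]; exact hsub
    _ ≤ (1/(d:ℝ)) * ((d:ℝ)/2 + (d:ℝ)/2) := by
        rw [hrefl]
        apply mul_le_mul_of_nonneg_left (by linarith) (by positivity)
    _ = 1 := by field_simp; norm_num
lemma sum_G_le (d m : ℕ) (hd : 1 ≤ d) (t : Finset ℕ) :
    ∑ j ∈ t, F0 d ((j:ℤ)-m).natAbs ≤ 2 := by
  classical
  have himg : ∀ (u : Finset ℕ) (f : ℕ → ℕ), Set.InjOn f u →
      (∀ j ∈ u, ((j:ℤ)-m).natAbs = f j) →
      ∑ j ∈ u, F0 d ((j:ℤ)-m).natAbs ≤ 1 := by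
    intro u f hinj hf
    have : ∑ j ∈ u, F0 d ((j:ℤ)-m).natAbs = ∑ b ∈ u.image f, F0 d b := by
      rw [Finset.sum_image (fun a ha b hb hab => hinj ha hb hab)]
      exact Finset.sum_congr rfl fun j hj => by rw [hf j hj]
    rw [this]
    exact sum_F0_le d hd _
  rw [← Finset.sum_filter_add_sum_filter_not t (· < m)]
  have h1 : ∑ j ∈ t.filter (· < m), F0 d ((j:ℤ)-m).natAbs ≤ 1 := by
    apply himg _ (fun j => m - j)
    · intro a ha b hb hab
      simp only [Finset.coe_filter, Set.mem_setOf_eq] at ha hb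
      dsimp only at hab
      omega
    · intro j hj
      simp only [Finset.mem_filter] at hj
      omega
  have h2 : ∑ j ∈ t.filter (¬ · < m), F0 d ((j:ℤ)-m).natAbs ≤ 1 := by
    apply himg _ (fun j => j - m)
    · intro a ha b hb hab
      simp only [Finset.coe_filter, Set.mem_setOf_eq] at ha hb
      dsimp only at hab
      omega
    · intro j hj
      simp only [Finset.mem_filter] at hj
      omega
  linarith

/-- pointwise key inequality -/
lemma pointwise (n m j : ℕ) (hn : j ≠ n) (hm : j ≠ m) (hnm : n ≠ m) :
    1 / (jap ((j:ℕ) - (n:ℤ)) ^ 2 * jap ((j:ℕ) - (m:ℤ)))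
      ≤ (1/(((m:ℤ)-n).natAbs : ℝ)) * (1/((j:ℝ)-n)^2 + F0 ((m:ℤ)-n).natAbs ((j:ℤ)-m).natAbs) := by
  set d : ℕ := ((m:ℤ)-n).natAbs with hd
  set b : ℕ := ((j:ℤ)-m).natAbs with hb
  set a : ℕ := ((j:ℤ)-n).natAbs with ha
  have hdpos : 1 ≤ d := by
    rw [hd]; omega
  have hapos : 1 ≤ a := by rw [ha]; omega
  have hbpos : 1 ≤ b := by rw [hb]; omega
  have htri : d ≤ a + b := by rw [hd, ha, hb]; omega
  have hA : jap ((j:ℕ) - (n:ℤ)) = (a:ℝ) := jap_eq_natAbs _ (by omega)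
  have hB : jap ((j:ℕ) - (m:ℤ)) = (b:ℝ) := jap_eq_natAbs _ (by omega)
  have hA2 : ((j:ℝ)-n)^2 = (a:ℝ)^2 := by rw [sq_cast_eq j n, ha]
  rw [hA, hB, hA2]
  have haR : (1:ℝ) ≤ a := by exact_mod_cast hapos
  have hbR : (1:ℝ) ≤ b := by exact_mod_cast hbpos
  have hdR : (1:ℝ) ≤ d := by exact_mod_cast hdpos
  by_cases hcase : b < d
  · -- near case
    rw [F0, if_pos ⟨hbpos, hcase⟩]
    have hdb : 1 ≤ d - b := by omega
    have hdbR : ((d - b : ℕ):ℝ) = (d:ℝ) - b := by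
      push_cast [Nat.cast_sub hcase.le]; ring
    have hadb : ((d:ℝ) - b) ≤ a := by
      have : (d:ℝ) ≤ a + b := by exact_mod_cast htri
      linarith
    have hdbRpos : (0:ℝ) < (d:ℝ) - b := by
      rw [← hdbR]; exact_mod_cast hdb
    rw [hdbR]
    have habpos : (0:ℝ) < (a:ℝ)*b := by positivity
    have key1 : 1/((a:ℝ)*b) ≤ 1/(((d:ℝ)-b)*b) := by
      apply one_div_le_one_div_of_le (by positivity)
      exact mul_le_mul_of_nonneg_right hadb (by linarith)
    have key2 : 1/(((d:ℝ)-b)*b) = (1/(d:ℝ))*(1/(b:ℝ) + 1/((d:ℝ)-b)) := by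
      field_simp
      ring
    have key3 : (d:ℝ)*(1/((a:ℝ)^2*b)) ≤ 1/(a:ℝ)^2 + 1/((a:ℝ)*b) := by
      have e1 : (d:ℝ)*(1/((a:ℝ)^2*b)) = (d:ℝ)/((a:ℝ)^2*b) := by ring
      have e2 : ((a:ℝ)+b)/((a:ℝ)^2*b) = 1/(a:ℝ)^2 + 1/((a:ℝ)*b) := by
        field_simp
        ring
      rw [e1, ← e2]
      apply div_le_div_of_nonneg_right ?_ (by positivity)
      · exact_mod_cast htri
    have final : 1/((a:ℝ)^2*b) = (1/(d:ℝ))*((d:ℝ)*(1/((a:ℝ)^2*b))) := by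
      field_simp
    rw [final]
    have hrec : (d:ℝ)*(1/((a:ℝ)^2*b)) ≤ 1/(a:ℝ)^2 + 1/(d:ℝ)*(1/(b:ℝ) + 1/((d:ℝ)-b)) := by
      calc (d:ℝ)*(1/((a:ℝ)^2*b)) ≤ 1/(a:ℝ)^2 + 1/((a:ℝ)*b) := key3
        _ ≤ 1/(a:ℝ)^2 + 1/(d:ℝ)*(1/(b:ℝ) + 1/((d:ℝ)-b)) := by
            rw [← key2]; linarith
    apply mul_le_mul_of_nonneg_left hrec (by positivity)
  · -- far case : d ≤ b
    rw [F0, if_neg (by omega), add_zero]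
    have hdb : (d:ℝ) ≤ b := by exact_mod_cast not_lt.mp hcase
    rw [div_mul_div_comm, one_mul]
    apply one_div_le_one_div_of_le (by positivity)
    calc (d:ℝ)*(a:ℝ)^2 ≤ (b:ℝ)*(a:ℝ)^2 := by nlinarith
      _ = (a:ℝ)^2*b := by ring

/-- For all `n m : ℕ`, the sum over `j ≥ 0`, `j ≠ n`, `j ≠ m` of
`1/(⟨j-n⟩² ⟨j-m⟩)` is at most `K/⟨m-n⟩` with `K = 3 + 2ζ(2) = 3 + 2·π²/6`. -/
theorem sum_convolution_bound (n m : ℕ) :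
    (∑' j : {j : ℕ // j ≠ n ∧ j ≠ m},
        1 / (jap ((j : ℕ) - (n : ℤ)) ^ 2 * jap ((j : ℕ) - (m : ℤ))))
      ≤ (3 + 2 * (π ^ 2 / 6)) / jap ((m : ℤ) - (n : ℤ)) := by
  have hK : (0:ℝ) ≤ (3 + 2 * (π ^ 2 / 6)) / jap ((m : ℤ) - (n : ℤ)) := by
    apply div_nonneg (by positivity)
    exact le_trans zero_le_one (le_max_left _ _)
  apply tsum_le_of_sum_le' hK
  intro s
  by_cases hnm : n = m
  · -- diagonal case
    subst hnm
    have hjap : jap ((n:ℤ) - n) = 1 := by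
      simp [jap]
    rw [hjap, div_one]
    have hbd : ∀ x ∈ s, 1 / (jap ((x:ℕ) - (n:ℤ)) ^ 2 * jap ((x:ℕ) - (n:ℤ)))
        ≤ 1/(((x:ℕ):ℝ)-n)^2 := by
      intro x _
      have hx := x.2.1
      have hA : jap ((x:ℕ) - (n:ℤ)) = ((((x:ℕ):ℤ)-n).natAbs : ℝ) := jap_eq_natAbs _ (by omega)
      have ha1 : 1 ≤ ((((x:ℕ):ℤ)-n).natAbs : ℝ) := by exact_mod_cast (by omega : 1 ≤ (((x:ℕ):ℤ)-n).natAbs)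
      have hA2 : (((x:ℕ):ℝ)-n)^2 = ((((x:ℕ):ℤ)-n).natAbs : ℝ)^2 := sq_cast_eq (x:ℕ) n
      rw [hA, hA2]
      apply one_div_le_one_div_of_le (by positivity)
      nlinarith
    calc ∑ x ∈ s, 1 / (jap ((x:ℕ) - (n:ℤ)) ^ 2 * jap ((x:ℕ) - (n:ℤ)))
        ≤ ∑ x ∈ s, 1/(((x:ℕ):ℝ)-n)^2 := Finset.sum_le_sum hbd
      _ = ∑ j ∈ s.map (Function.Embedding.subtype _), 1/((j:ℝ)-n)^2 := by
          rw [Finset.sum_map]; rfl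
      _ ≤ π^2/3 := by
          apply sum_inv_sq
          intro j hj
          rw [Finset.mem_map] at hj
          obtain ⟨x, _, rfl⟩ := hj
          exact x.2.1
      _ ≤ 3 + 2 * (π^2/6) := by linarith
  · -- off-diagonal
    set d : ℕ := ((m:ℤ)-n).natAbs with hd
    have hdpos : 1 ≤ d := by rw [hd]; omega
    have hdR : (1:ℝ) ≤ (d:ℝ) := by exact_mod_cast hdpos
    have hjap : jap ((m:ℤ) - n) = (d:ℝ) := jap_eq_natAbs _ (by omega)
    rw [hjap]
    have hbd : ∀ x ∈ s, 1 / (jap ((x:ℕ) - (n:ℤ)) ^ 2 * jap ((x:ℕ) - (m:ℤ)))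
        ≤ (1/(d:ℝ)) * (1/(((x:ℕ):ℝ)-n)^2 + F0 d (((x:ℕ):ℤ)-m).natAbs) :=
      fun x _ => pointwise n m x x.2.1 x.2.2 hnm
    calc ∑ x ∈ s, 1 / (jap ((x:ℕ) - (n:ℤ)) ^ 2 * jap ((x:ℕ) - (m:ℤ)))
        ≤ ∑ x ∈ s, (1/(d:ℝ)) * (1/(((x:ℕ):ℝ)-n)^2 + F0 d (((x:ℕ):ℤ)-m).natAbs) :=
          Finset.sum_le_sum hbd
      _ = (1/(d:ℝ)) * ((∑ x ∈ s, 1/(((x:ℕ):ℝ)-n)^2) + ∑ x ∈ s, F0 d (((x:ℕ):ℤ)-m).natAbs) := by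
          rw [← Finset.mul_sum, ← Finset.sum_add_distrib]
      _ ≤ (1/(d:ℝ)) * (π^2/3 + 2) := by
          apply mul_le_mul_of_nonneg_left ?_ (by positivity)
          have e1 : ∑ x ∈ s, 1/(((x:ℕ):ℝ)-n)^2
              = ∑ j ∈ s.map (Function.Embedding.subtype _), 1/((j:ℝ)-n)^2 := by
            rw [Finset.sum_map]; rfl
          have e2 : ∑ x ∈ s, F0 d (((x:ℕ):ℤ)-m).natAbs
              = ∑ j ∈ s.map (Function.Embedding.subtype _), F0 d ((j:ℤ)-m).natAbs := by
            rw [Finset.sum_map]; rfl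
          have b1 : ∑ j ∈ s.map (Function.Embedding.subtype _), 1/((j:ℝ)-n)^2 ≤ π^2/3 := by
            apply sum_inv_sq
            intro j hj
            rw [Finset.mem_map] at hj
            obtain ⟨x, _, rfl⟩ := hj
            exact x.2.1
          have b2 := sum_G_le d m hdpos (s.map (Function.Embedding.subtype _))
          rw [e1, e2]
          linarith
      _ = (π^2/3 + 2) * (1/(d:ℝ)) := by ring
      _ ≤ (3 + 2 * (π^2/6)) * (1/(d:ℝ)) :=
          mul_le_mul_of_nonneg_right (by linarith) (by positivity)
      _ = (3 + 2 * (π^2/6)) / (d:ℝ) := by ring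
end

section
/- Let {P_n}_{n∈I} be a complete family of mutually orthogonal projections on a Hilbert space. For bounded operators A, B with ‖A‖₂ < ∞ and ‖B‖₁ < ∞, it holds ‖AB‖₁ ≤ K ‖A‖₂ ‖B‖₁, where K = 3 + 2ζ(2). -/
open Real

lemma one_le_jap (a : ℤ) : 1 ≤ jap a := le_max_left _ _
lemma jap_pos (a : ℤ) : 0 < jap a := lt_of_lt_of_le one_pos (one_le_jap a)
lemma jap_nonneg (a : ℤ) : 0 ≤ jap a := (jap_pos a).le
lemma jap_ne_zero (a : ℤ) : jap a ≠ 0 := (jap_pos a).ne'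
lemma jap_neg (a : ℤ) : jap (-a) = jap a := by simp [jap]
lemma jap_zero : jap 0 = 1 := by simp [jap]
lemma jap_mono {a b : ℤ} (h : |a| ≤ |b|) : jap a ≤ jap b := by
  apply max_le_max le_rfl
  rw [← Int.cast_abs, ← Int.cast_abs]
  exact_mod_cast h
lemma jap_of_pos {a : ℤ} (h : 0 < a) : jap a = (a : ℝ) := by
  rw [jap, abs_of_pos (by exact_mod_cast h)]
  exact max_eq_right (by exact_mod_cast h)
lemma jap_of_neg {a : ℤ} (h : a < 0) : jap a = ((-a : ℤ) : ℝ) := by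
  rw [← jap_neg a]; exact jap_of_pos (by omega)

lemma basel_finset (G : Finset ℕ) : ∑ i ∈ G, 1 / (i : ℝ) ^ 2 ≤ π ^ 2 / 6 :=
  sum_le_hasSum G (fun i _ => by positivity) hasSum_zeta_two

lemma tele_range (N : ℕ) :
    ∑ c ∈ Finset.range (N + 1), 1 / ((c : ℝ) * (c + 1)) = 1 - 1 / (N + 1) := by
  induction N with
  | zero => simp
  | succ n ih =>
    rw [Finset.sum_range_succ, ih]
    have h1 : ((n : ℝ) + 1) ≠ 0 := by positivity
    have h2 : ((n : ℝ) + 1 + 1) ≠ 0 := by positivity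
    push_cast
    field_simp
    ring

lemma tele_finset (G : Finset ℕ) : ∑ c ∈ G, 1 / ((c : ℝ) * (c + 1)) ≤ 1 := by
  obtain ⟨N, hN⟩ := G.exists_nat_subset_range
  calc ∑ c ∈ G, 1 / ((c : ℝ) * (c + 1))
      ≤ ∑ c ∈ Finset.range (N + 1), 1 / ((c : ℝ) * (c + 1)) :=
        Finset.sum_le_sum_of_subset_of_nonneg
          (hN.trans (Finset.range_subset_range.2 (Nat.le_succ N))) (fun i _ _ => by positivity)
    _ = 1 - 1 / (N + 1) := tele_range N
    _ ≤ 1 := by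
        have : (0:ℝ) ≤ 1 / (N + 1) := by positivity
        linarith

lemma harm (d : ℕ) : 2 * ∑ j ∈ Finset.Ico 1 d, (1 : ℝ) / j ≤ d := by
  induction d with
  | zero => simp
  | succ n ih =>
    match n, ih with
    | 0, _ => simp
    | 1, _ => norm_num [Finset.sum_Ico_succ_top]
    | (m+2), ih =>
      rw [Finset.sum_Ico_succ_top (by omega)]
      have h1 : (0:ℝ) < (m:ℝ) + 2 := by positivity
      have h2 : 2 * ((1:ℝ) / ((m:ℝ) + 2)) ≤ 1 := by
        rw [mul_one_div, div_le_one h1]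
        linarith
      push_cast at ih ⊢
      rw [mul_add]
      linarith

lemma midsum (d : ℕ) (hd : 1 ≤ d) :
    ∑ j ∈ Finset.Ico 1 d, 1 / ((j : ℝ) * ((d : ℝ) - j)) ≤ 1 := by
  have hd0 : (0:ℝ) < d := by exact_mod_cast hd
  have key : ∀ j ∈ Finset.Ico 1 d,
      1 / ((j : ℝ) * ((d : ℝ) - j)) = 1 / d * (1 / j + 1 / ((d : ℝ) - j)) := by
    intro j hj
    obtain ⟨h1, h2⟩ := Finset.mem_Ico.mp hj
    have hj0 : (j : ℝ) ≠ 0 := by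
      have : (0:ℝ) < j := by exact_mod_cast h1
      linarith
    have hdj : ((d : ℝ) - j) ≠ 0 := by
      have : (j : ℝ) < d := by exact_mod_cast h2
      linarith
    field_simp
    try ring
  rw [Finset.sum_congr rfl key, ← Finset.mul_sum, Finset.sum_add_distrib]
  have hrefl : ∑ j ∈ Finset.Ico 1 d, 1 / ((d : ℝ) - j)
      = ∑ j ∈ Finset.Ico 1 d, 1 / (j : ℝ) := by
    apply Finset.sum_nbij' (fun j => d - j) (fun j => d - j)
    · intro a ha; obtain ⟨h1, h2⟩ := Finset.mem_Ico.mp ha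
      exact Finset.mem_Ico.mpr ⟨by omega, by omega⟩
    · intro a ha; obtain ⟨h1, h2⟩ := Finset.mem_Ico.mp ha
      exact Finset.mem_Ico.mpr ⟨by omega, by omega⟩
    · intro a ha; obtain ⟨h1, h2⟩ := Finset.mem_Ico.mp ha; omega
    · intro a ha; obtain ⟨h1, h2⟩ := Finset.mem_Ico.mp ha; omega
    · intro a ha; obtain ⟨h1, h2⟩ := Finset.mem_Ico.mp ha
      rw [Nat.cast_sub (by omega)]
  rw [hrefl]
  have h2 := harm d
  rw [one_div, inv_mul_eq_div, div_le_one hd0]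
  linarith

lemma sum_toNat (F : Finset ℤ) (hF : ∀ j ∈ F, 0 < j) (f : ℕ → ℝ) :
    ∑ j ∈ F, f j.toNat = ∑ i ∈ F.image Int.toNat, f i := by
  rw [Finset.sum_image]
  intro x hx y hy hxy
  have hx' := hF x hx
  have hy' := hF y hy
  omega

lemma sum_japsq_neg (F : Finset ℤ) (hF : ∀ j ∈ F, j < 0) :
    ∑ j ∈ F, 1 / jap j ^ 2 ≤ π ^ 2 / 6 := by
  have key : ∑ j ∈ F, 1 / jap j ^ 2 = ∑ j ∈ F, (fun i : ℕ => 1 / (i : ℝ) ^ 2) (-j).toNat := by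
    apply Finset.sum_congr rfl
    intro j hj
    have hj' := hF j hj
    have h1 : (((-j).toNat : ℤ) : ℝ) = ((-j : ℤ) : ℝ) := by
      rw [Int.toNat_of_nonneg (by omega)]
    rw [jap_of_neg hj']
    simp only [Int.cast_natCast] at h1 ⊢
    rw [h1]
  rw [key]
  have : ∑ j ∈ F, (fun i : ℕ => 1 / (i : ℝ) ^ 2) (-j).toNat
      = ∑ i ∈ (F.image Neg.neg).image Int.toNat, 1 / (i : ℝ) ^ 2 := by
    rw [← sum_toNat]
    · rw [Finset.sum_image]
      intro x hx y hy h; omega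
    · intro j hj
      simp only [Finset.mem_image] at hj
      obtain ⟨x, hx, rfl⟩ := hj
      have := hF x hx; omega
  rw [this]
  exact basel_finset _

lemma sum_japsq_pos (F : Finset ℤ) (hF : ∀ j ∈ F, 0 < j) :
    ∑ j ∈ F, 1 / jap j ^ 2 ≤ π ^ 2 / 6 := by
  have key : ∑ j ∈ F, 1 / jap j ^ 2 = ∑ j ∈ F, (fun i : ℕ => 1 / (i : ℝ) ^ 2) j.toNat := by
    apply Finset.sum_congr rfl
    intro j hj
    have hj' := hF j hj
    have h1 : ((j.toNat : ℤ) : ℝ) = ((j : ℤ) : ℝ) := by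
      rw [Int.toNat_of_nonneg (by omega)]
    rw [jap_of_pos hj']
    simp only [Int.cast_natCast] at h1 ⊢
    rw [h1]
  rw [key, sum_toNat F hF (fun i : ℕ => 1 / (i : ℝ) ^ 2)]
  exact basel_finset _

lemma core_pos (d : ℕ) (hd : 1 ≤ d) (F : Finset ℤ) :
    ∑ j ∈ F, jap d / (jap j ^ 2 * jap (j - d)) ≤ 3 + 2 * (π ^ 2 / 6) := by
  have hdz : (0:ℤ) < (d:ℤ) := by exact_mod_cast hd
  have hdr : (1:ℝ) ≤ (d:ℝ) := by exact_mod_cast hd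
  set t : ℤ → ℝ := fun j => jap d / (jap j ^ 2 * jap (j - d)) with ht
  have ht0 : ∀ j, 0 ≤ t j := fun j =>
    div_nonneg (jap_nonneg _) (mul_nonneg (pow_nonneg (jap_nonneg _) 2) (jap_nonneg _))
  have split1 := Finset.sum_filter_add_sum_filter_not F (fun j => j ≤ 0) t
  set F1 := F.filter (fun j => j ≤ 0) with hF1
  set G := F.filter (fun j => ¬ j ≤ 0) with hG
  have split2 := Finset.sum_filter_add_sum_filter_not G (fun j => j < d) t
  set F2 := G.filter (fun j => j < (d:ℤ)) with hF2
  set G2 := G.filter (fun j => ¬ j < (d:ℤ)) with hG2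
  have split3 := Finset.sum_filter_add_sum_filter_not G2 (fun j => j = d) t
  set F3 := G2.filter (fun j => j = (d:ℤ)) with hF3
  set F4 := G2.filter (fun j => ¬ j = (d:ℤ)) with hF4
  -- membership facts
  have mF1 : ∀ j ∈ F1, j ≤ 0 := fun j hj => (Finset.mem_filter.mp hj).2
  have mF2 : ∀ j ∈ F2, 0 < j ∧ j < d := by
    intro j hj
    have h2 := (Finset.mem_filter.mp hj).2
    have h1 := (Finset.mem_filter.mp (Finset.mem_filter.mp hj).1).2
    exact ⟨by omega, h2⟩
  have mF4 : ∀ j ∈ F4, (d:ℤ) < j := by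
    intro j hj
    have h2 := (Finset.mem_filter.mp hj).2
    have h1 := (Finset.mem_filter.mp (Finset.mem_filter.mp hj).1).2
    omega
  -- Region 1 : j ≤ 0
  have b1 : ∑ j ∈ F1, t j ≤ 1 + π ^ 2 / 6 := by
    have point : ∀ j ∈ F1, t j ≤ 1 / jap j ^ 2 := by
      intro j hj
      have hj0 := mF1 j hj
      have hmono : jap (d:ℤ) ≤ jap (j - d) := by
        apply jap_mono
        rw [abs_of_nonneg (by omega : (0:ℤ) ≤ (d:ℤ)), abs_of_nonpos (by omega)]
        omega
      rw [ht]
      have h1 : 0 < jap j ^ 2 := pow_pos (jap_pos j) 2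
      have h2 : 0 < jap (j - d) := jap_pos _
      rw [div_le_div_iff₀ (by positivity) h1]
      nlinarith [jap_pos (j - (d:ℤ))]
    calc ∑ j ∈ F1, t j ≤ ∑ j ∈ F1, 1 / jap j ^ 2 := Finset.sum_le_sum point
      _ ≤ 1 + π ^ 2 / 6 := by
          have spl := Finset.sum_filter_add_sum_filter_not F1 (fun j => j = 0)
            (fun j => 1 / jap j ^ 2)
          have e1 : ∑ j ∈ F1.filter (fun j => j = 0), 1 / jap j ^ 2 ≤ 1 := by
            have hsub : F1.filter (fun j => j = 0) ⊆ {0} := by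
              intro j hj
              simp only [Finset.mem_singleton]
              exact (Finset.mem_filter.mp hj).2
            calc ∑ j ∈ F1.filter (fun j => j = 0), 1 / jap j ^ 2
                ≤ ∑ j ∈ ({0} : Finset ℤ), 1 / jap j ^ 2 :=
                  Finset.sum_le_sum_of_subset_of_nonneg hsub (fun i _ _ => by positivity)
              _ = 1 := by simp [jap_zero]
          have e2 : ∑ j ∈ F1.filter (fun j => ¬ j = 0), 1 / jap j ^ 2 ≤ π ^ 2 / 6 := by
            apply sum_japsq_neg
            intro j hj
            have h2 := (Finset.mem_filter.mp hj).2
            have h1 := mF1 j (Finset.mem_filter.mp hj).1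
            omega
          linarith
  -- Region 4 : j > d
  have b4 : ∑ j ∈ F4, t j ≤ 1 / 2 := by
    have point : ∀ j ∈ F4, t j ≤
        (1:ℝ)/2 * (fun c : ℕ => 1 / ((c : ℝ) * (c + 1))) (j - d).toNat := by
      intro j hj
      have hj' := mF4 j hj
      have hc : ((( j - (d:ℤ)).toNat : ℤ) : ℝ) = (((j:ℤ) - d : ℤ) : ℝ) := by
        rw [Int.toNat_of_nonneg (by omega)]
      set c : ℝ := (((j - (d:ℤ)).toNat : ℕ) : ℝ) with hcdef
      have hc1 : (1:ℝ) ≤ c := by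
        have h9 : (1:ℕ) ≤ (j - (d:ℤ)).toNat := by omega
        rw [hcdef]
        exact_mod_cast h9
      have hjr : (j:ℝ) = (d:ℝ) + c := by
        simp only [Int.cast_natCast] at hc
        push_cast at hc ⊢
        linarith
      rw [ht]
      simp only [Int.cast_natCast]
      rw [jap_of_pos (by omega : (0:ℤ) < j), jap_of_pos (by omega : (0:ℤ) < j - d),
        jap_of_pos hdz]
      have hceq : ((j - (d:ℤ) : ℤ) : ℝ) = c := by
        simp only [Int.cast_natCast] at hc; rw [hc.symm]
      rw [hceq, hjr]
      have hc0 : (0:ℝ) < c := by linarith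
      have hcne : c ≠ 0 := hc0.ne'
      have hcne1 : c + 1 ≠ 0 := by positivity
      rw [show (1:ℝ)/2 * (1 / (c * (c + 1))) = 1 / (2 * (c * (c+1))) by
        field_simp]
      have hx : (0:ℝ) < (d:ℝ) + c := by linarith
      have h2 : (0:ℝ) < ((d:ℝ) + c) ^ 2 * c := by positivity
      have h3 : (0:ℝ) < 2 * (c * (c + 1)) := by positivity
      rw [div_le_div_iff₀ h2 h3]
      push_cast
      nlinarith [hdr, mul_nonneg hc0.le (sq_nonneg ((d:ℝ) - 1)), mul_nonneg hc0.le
        (mul_nonneg (sub_nonneg.mpr hc1) (by linarith : (0:ℝ) ≤ c + 1))]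
    calc ∑ j ∈ F4, t j
        ≤ ∑ j ∈ F4, (1:ℝ)/2 * (fun c : ℕ => 1 / ((c : ℝ) * (c + 1))) (j - d).toNat :=
          Finset.sum_le_sum point
      _ = (1:ℝ)/2 * ∑ j ∈ F4, (fun c : ℕ => 1 / ((c : ℝ) * (c + 1))) (j - d).toNat := by
          rw [Finset.mul_sum]
      _ ≤ 1/2 * 1 := by
          apply mul_le_mul_of_nonneg_left ?_ (by norm_num)
          have himg : ∑ j ∈ F4, (fun c : ℕ => 1 / ((c : ℝ) * (c + 1))) (j - d).toNat
              = ∑ i ∈ (F4.image (fun j => j - (d:ℤ))).image Int.toNat,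
                  1 / ((i : ℝ) * (i + 1)) := by
            rw [← sum_toNat]
            · rw [Finset.sum_image]
              intro x hx y hy h; have h' : x - (d:ℤ) = y - d := h; omega
            · intro j hj
              simp only [Finset.mem_image] at hj
              obtain ⟨x, hx, rfl⟩ := hj
              have := mF4 x hx; omega
          rw [himg]
          exact tele_finset _
      _ = 1/2 := by norm_num
  -- Regions 2,3
  have hpisq : (0:ℝ) ≤ π ^ 2 / 6 := by positivity
  have htd : t (d:ℤ) = 1 / (d:ℝ) := by
    rw [ht]
    simp only [sub_self, jap_zero, jap_of_pos hdz, mul_one]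
    have hdne : (d:ℝ) ≠ 0 := by linarith
    push_cast
    rw [sq, ← div_div, div_self hdne]
  have e3 : ∑ j ∈ F3, t j ≤ 1 / (d:ℝ) := by
    have hsub : F3 ⊆ {(d:ℤ)} := fun j hj =>
      Finset.mem_singleton.mpr (Finset.mem_filter.mp hj).2
    calc ∑ j ∈ F3, t j ≤ ∑ j ∈ ({(d:ℤ)} : Finset ℤ), t j :=
          Finset.sum_le_sum_of_subset_of_nonneg hsub (fun i _ _ => ht0 i)
      _ = t (d:ℤ) := Finset.sum_singleton _ _
      _ = 1 / (d:ℝ) := htd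
  have b23 : ∑ j ∈ F2, t j + ∑ j ∈ F3, t j ≤ π ^ 2 / 6 + 3 / 2 := by
    rcases eq_or_lt_of_le hd with hd1 | hd2
    · -- d = 1
      have hF2e : F2 = ∅ := by
        apply Finset.eq_empty_of_forall_notMem
        intro j hj
        obtain ⟨h1, h2⟩ := mF2 j hj
        omega
      have hd1' : (d:ℝ) = 1 := by exact_mod_cast hd1.symm
      rw [hF2e, Finset.sum_empty]
      rw [hd1'] at e3
      norm_num at e3
      linarith
    · -- d ≥ 2
      have hd2' : (2:ℝ) ≤ (d:ℝ) := by
        have h9 : 2 ≤ d := hd2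
        exact_mod_cast h9
      have e3' : ∑ j ∈ F3, t j ≤ 1 / 2 := by
        calc ∑ j ∈ F3, t j ≤ 1 / (d:ℝ) := e3
          _ ≤ 1 / 2 := by
              apply one_div_le_one_div_of_le (by norm_num) hd2'
      have point2 : ∀ j ∈ F2, t j = 1 / (j:ℝ) ^ 2 + 1 / ((j:ℝ) * ((d:ℝ) - j)) := by
        intro j hj
        obtain ⟨h1, h2⟩ := mF2 j hj
        have hj0 : (0:ℝ) < (j:ℝ) := by exact_mod_cast h1
        have hjd : (j:ℝ) < (d:ℝ) := by exact_mod_cast h2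
        have hjap : jap j = (j:ℝ) := jap_of_pos h1
        have hjap2 : jap (j - d) = (d:ℝ) - (j:ℝ) := by
          rw [jap_of_neg (by omega)]
          push_cast
          ring
        rw [ht]
        simp only [hjap, hjap2, jap_of_pos hdz]
        push_cast
        have hne1 : (j:ℝ) ≠ 0 := hj0.ne'
        have hne2 : (d:ℝ) - (j:ℝ) ≠ 0 := by linarith
        field_simp
        ring
      have sum2 : ∑ j ∈ F2, t j ≤ π ^ 2 / 6 + 1 := by
        rw [Finset.sum_congr rfl point2, Finset.sum_add_distrib]
        have s1 : ∑ j ∈ F2, 1 / (j:ℝ) ^ 2 ≤ π ^ 2 / 6 := by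
          have hc : ∀ j ∈ F2, 1 / (j:ℝ) ^ 2 = 1 / jap j ^ 2 := fun j hj => by
            rw [jap_of_pos (mF2 j hj).1]
          rw [Finset.sum_congr rfl hc]
          exact sum_japsq_pos _ (fun j hj => (mF2 j hj).1)
        have s2 : ∑ j ∈ F2, 1 / ((j:ℝ) * ((d:ℝ) - j)) ≤ 1 := by
          have e : ∑ j ∈ F2, 1 / ((j:ℝ) * ((d:ℝ) - j))
              = ∑ j ∈ F2, (fun i : ℕ => 1 / ((i:ℝ) * ((d:ℝ) - i))) j.toNat := by
            apply Finset.sum_congr rfl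
            intro j hj
            have h1 := (mF2 j hj).1
            have hcast : ((j.toNat : ℕ) : ℝ) = ((j : ℤ) : ℝ) := by
              exact_mod_cast Int.toNat_of_nonneg h1.le
            simp only
            rw [hcast]
          rw [e, sum_toNat F2 (fun j hj => (mF2 j hj).1)
            (fun i : ℕ => 1 / ((i:ℝ) * ((d:ℝ) - i)))]
          have hsub : F2.image Int.toNat ⊆ Finset.Ico 1 d := by
            intro i hi
            simp only [Finset.mem_image] at hi
            obtain ⟨j, hj, rfl⟩ := hi
            obtain ⟨h1, h2⟩ := mF2 j hj
            exact Finset.mem_Ico.mpr ⟨by omega, by omega⟩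
          calc ∑ i ∈ F2.image Int.toNat, 1 / ((i:ℝ) * ((d:ℝ) - i))
              ≤ ∑ i ∈ Finset.Ico 1 d, 1 / ((i:ℝ) * ((d:ℝ) - i)) := by
                apply Finset.sum_le_sum_of_subset_of_nonneg hsub
                intro i hi _
                obtain ⟨h1, h2⟩ := Finset.mem_Ico.mp hi
                have hh1 : (0:ℝ) < (i:ℝ) := by exact_mod_cast h1
                have hh2 : (i:ℝ) < (d:ℝ) := by exact_mod_cast h2
                have h3 : (0:ℝ) < (i:ℝ) * ((d:ℝ) - i) := by nlinarith
                exact one_div_nonneg.mpr h3.le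
            _ ≤ 1 := midsum d hd
        linarith
      linarith
  linarith [split1, split2, split3, b1, b23, b4]

lemma sum_japsq (F : Finset ℤ) : ∑ j ∈ F, 1 / jap j ^ 2 ≤ 1 + 2 * (π ^ 2 / 6) := by
  have s1 := Finset.sum_filter_add_sum_filter_not F (fun j => j < 0)
    (fun j => 1 / jap j ^ 2)
  have s2 := Finset.sum_filter_add_sum_filter_not (F.filter (fun j => ¬ j < 0))
    (fun j => j = 0) (fun j => 1 / jap j ^ 2)
  have e1 := sum_japsq_neg (F.filter (fun j => j < 0))
    (fun j hj => (Finset.mem_filter.mp hj).2)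
  have e2 : ∑ j ∈ (F.filter (fun j => ¬ j < 0)).filter (fun j => j = 0),
      1 / jap j ^ 2 ≤ 1 := by
    have hsub : (F.filter (fun j => ¬ j < 0)).filter (fun j => j = 0) ⊆ {0} := by
      intro j hj
      exact Finset.mem_singleton.mpr (Finset.mem_filter.mp hj).2
    calc ∑ j ∈ (F.filter (fun j => ¬ j < 0)).filter (fun j => j = 0), 1 / jap j ^ 2
        ≤ ∑ j ∈ ({0} : Finset ℤ), 1 / jap j ^ 2 :=
          Finset.sum_le_sum_of_subset_of_nonneg hsub (fun i _ _ => by positivity)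
      _ = 1 := by simp [jap_zero]
  have e3 := sum_japsq_pos ((F.filter (fun j => ¬ j < 0)).filter (fun j => ¬ j = 0))
    (fun j hj => by
      have h2 := (Finset.mem_filter.mp hj).2
      have h1 := (Finset.mem_filter.mp (Finset.mem_filter.mp hj).1).2
      omega)
  linarith

lemma core_int (d : ℤ) (F : Finset ℤ) :
    ∑ j ∈ F, jap d / (jap j ^ 2 * jap (j - d)) ≤ 3 + 2 * (π ^ 2 / 6) := by
  rcases lt_trichotomy d 0 with hd | hd | hd
  · have h1 : (1:ℕ) ≤ (-d).toNat := by omega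
    have hcast : (((-d).toNat : ℕ) : ℤ) = -d := Int.toNat_of_nonneg (by omega)
    have key : ∑ j ∈ F, jap d / (jap j ^ 2 * jap (j - d))
        = ∑ i ∈ F.image (fun j => -j),
            jap (((-d).toNat : ℕ) : ℤ) / (jap i ^ 2 * jap (i - (((-d).toNat : ℕ) : ℤ))) := by
      rw [Finset.sum_image (fun x _ y _ h => by omega)]
      apply Finset.sum_congr rfl
      intro j _
      rw [hcast, show -j - -d = -(j - d) by ring, jap_neg, jap_neg, jap_neg]
    rw [key]
    exact core_pos (-d).toNat h1 _
  · subst hd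
    have point : ∀ j ∈ F, jap 0 / (jap j ^ 2 * jap (j - 0)) ≤ 1 / jap j ^ 2 := by
      intro j _
      rw [sub_zero, jap_zero]
      have h1 : 0 < jap j ^ 2 := pow_pos (jap_pos j) 2
      have h2 : 0 < jap j := jap_pos j
      rw [div_le_div_iff₀ (by positivity) h1]
      nlinarith [one_le_jap j]
    have hpisq : (0:ℝ) ≤ π ^ 2 / 6 := by positivity
    calc ∑ j ∈ F, jap 0 / (jap j ^ 2 * jap (j - 0))
        ≤ ∑ j ∈ F, 1 / jap j ^ 2 := Finset.sum_le_sum point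
      _ ≤ 1 + 2 * (π ^ 2 / 6) := sum_japsq F
      _ ≤ 3 + 2 * (π ^ 2 / 6) := by linarith
  · have h1 : (1:ℕ) ≤ d.toNat := by omega
    have hcast : ((d.toNat : ℕ) : ℤ) = d := Int.toNat_of_nonneg hd.le
    rw [show d = ((d.toNat : ℕ) : ℤ) from hcast.symm]
    exact core_pos d.toNat h1 F

lemma core_nat (n m N : ℕ) :
    ∑ k ∈ Finset.range N, jap ((n:ℤ) - m) / (jap ((n:ℤ) - k) ^ 2 * jap ((k:ℤ) - m))
      ≤ 3 + 2 * (π ^ 2 / 6) := by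
  have key : ∑ k ∈ Finset.range N, jap ((n:ℤ) - m) / (jap ((n:ℤ) - k) ^ 2 * jap ((k:ℤ) - m))
      = ∑ j ∈ (Finset.range N).image (fun k : ℕ => (n:ℤ) - k),
          jap ((n:ℤ) - m) / (jap j ^ 2 * jap (j - ((n:ℤ) - m))) := by
    rw [Finset.sum_image (fun x _ y _ h => by omega)]
    apply Finset.sum_congr rfl
    intro k _
    rw [show ((n:ℤ) - k) - ((n:ℤ) - m) = -((k:ℤ) - m) by ring, jap_neg]
  rw [key]
  exact core_int _ _

lemma core_nonneg (n m : ℕ) (k : ℕ) :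
    0 ≤ jap ((n:ℤ) - m) / (jap ((n:ℤ) - k) ^ 2 * jap ((k:ℤ) - m)) :=
  div_nonneg (jap_nonneg _) (mul_nonneg (pow_nonneg (jap_nonneg _) 2) (jap_nonneg _))

lemma core_summable (n m : ℕ) :
    Summable (fun k : ℕ => jap ((n:ℤ) - m) / (jap ((n:ℤ) - k) ^ 2 * jap ((k:ℤ) - m))) :=
  summable_of_sum_range_le (core_nonneg n m) (core_nat n m)

lemma core_tsum (n m : ℕ) :
    ∑' k : ℕ, jap ((n:ℤ) - m) / (jap ((n:ℤ) - k) ^ 2 * jap ((k:ℤ) - m))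
      ≤ 3 + 2 * (π ^ 2 / 6) :=
  Real.tsum_le_of_sum_range_le (core_nonneg n m) (core_nat n m)

/-- Let `{P n}` be a complete family of mutually orthogonal projections on a complex
Hilbert space. For bounded operators `A, B` with `‖A‖₂ < ∞` and `‖B‖₁ < ∞` it holds
`‖AB‖₁ ≤ K ‖A‖₂ ‖B‖₁` where `K = 3 + 2ζ(2)`. The norms `‖·‖_l` are the suprema of
`⟨n-m⟩^l ‖P n · P m‖`; finiteness is expressed by `BddAbove`, and the bound on
`‖AB‖₁` is expressed blockwise (equivalently, as a bound on the supremum). -/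
theorem weighted_norm_product_bound
    {H : Type*} [NormedAddCommGroup H] [InnerProductSpace ℂ H] [CompleteSpace H]
    (P : ℕ → H →L[ℂ] H)
    (hproj : ∀ n, IsIdempotentElem (P n) ∧ IsSelfAdjoint (P n))
    (horth : ∀ n m, n ≠ m → P n ∘L P m = 0)
    (hcomplete : ∀ x : H, HasSum (fun n => P n x) x)
    (A B : H →L[ℂ] H)
    (hA : BddAbove (Set.range fun p : ℕ × ℕ =>
      jap ((p.1 : ℤ) - p.2) ^ 2 * ‖P p.1 ∘L A ∘L P p.2‖))
    (hB : BddAbove (Set.range fun p : ℕ × ℕ =>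
      jap ((p.1 : ℤ) - p.2) * ‖P p.1 ∘L B ∘L P p.2‖)) :
    ∀ n m : ℕ, jap ((n : ℤ) - m) * ‖P n ∘L (A ∘L B) ∘L P m‖ ≤
      (3 + 2 * (π ^ 2 / 6)) *
        ((⨆ p : ℕ × ℕ, jap ((p.1 : ℤ) - p.2) ^ 2 * ‖P p.1 ∘L A ∘L P p.2‖) *
          (⨆ p : ℕ × ℕ, jap ((p.1 : ℤ) - p.2) * ‖P p.1 ∘L B ∘L P p.2‖)) := by
  intro n m
  set NA := ⨆ p : ℕ × ℕ, jap ((p.1 : ℤ) - p.2) ^ 2 * ‖P p.1 ∘L A ∘L P p.2‖ with hNA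
  set NB := ⨆ p : ℕ × ℕ, jap ((p.1 : ℤ) - p.2) * ‖P p.1 ∘L B ∘L P p.2‖ with hNB
  have hNA0 : 0 ≤ NA := le_trans
    (mul_nonneg (pow_nonneg (jap_nonneg _) 2) (norm_nonneg _)) (le_ciSup hA (0, 0))
  have hNB0 : 0 ≤ NB := le_trans
    (mul_nonneg (jap_nonneg _) (norm_nonneg _)) (le_ciSup hB (0, 0))
  have hblockA : ∀ a b : ℕ, ‖P a ∘L A ∘L P b‖ ≤ NA / jap ((a:ℤ) - b) ^ 2 := by
    intro a b
    have h := le_ciSup hA (a, b)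
    rw [le_div_iff₀ (pow_pos (jap_pos _) 2), mul_comm]
    exact h
  have hblockB : ∀ a b : ℕ, ‖P a ∘L B ∘L P b‖ ≤ NB / jap ((a:ℤ) - b) := by
    intro a b
    have h := le_ciSup hB (a, b)
    rw [le_div_iff₀ (jap_pos _), mul_comm]
    exact h
  set K : ℝ := 3 + 2 * (π ^ 2 / 6) with hK
  have hpisq : (0:ℝ) ≤ π ^ 2 / 6 := by positivity
  have hK0 : 0 < K := by rw [hK]; linarith
  set d : ℤ := (n:ℤ) - m with hd
  have hjd : 0 < jap d := jap_pos d
  set T := P n ∘L (A ∘L B) ∘L P m with hT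
  have hTle : ‖T‖ ≤ K * NA * NB / jap d := by
    apply ContinuousLinearMap.opNorm_le_bound
    · exact div_nonneg (mul_nonneg (mul_nonneg hK0.le hNA0) hNB0) hjd.le
    intro x
    set y := B (P m x) with hy
    have hsum : HasSum (fun k => (P n ∘L A) (P k y)) ((P n ∘L A) y) :=
      (P n ∘L A).hasSum (hcomplete y)
    have hTx : T x = (P n ∘L A) y := rfl
    have htermeq : ∀ k, (P n ∘L A) (P k y) = (P n ∘L A ∘L P k) ((P k ∘L B ∘L P m) x) := by
      intro k
      have hid : P k (P k (B (P m x))) = P k (B (P m x)) := by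
        have h9 := (hproj k).1
        calc P k (P k (B (P m x))) = (P k * P k) (B (P m x)) := rfl
          _ = P k (B (P m x)) := by rw [h9]
      simp only [ContinuousLinearMap.comp_apply]
      rw [hy, hid]
    have hbound : ∀ k : ℕ, ‖(P n ∘L A) (P k y)‖ ≤
        (NA * NB * ‖x‖ / jap d) * (jap d / (jap ((n:ℤ) - k) ^ 2 * jap ((k:ℤ) - m))) := by
      intro k
      rw [htermeq k]
      have hja := jap_ne_zero ((n:ℤ) - k)
      have hjb := jap_ne_zero ((k:ℤ) - m)
      have hjd' := jap_ne_zero d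
      calc ‖(P n ∘L A ∘L P k) ((P k ∘L B ∘L P m) x)‖
          ≤ ‖P n ∘L A ∘L P k‖ * ‖(P k ∘L B ∘L P m) x‖ :=
            ContinuousLinearMap.le_opNorm _ _
        _ ≤ ‖P n ∘L A ∘L P k‖ * (‖P k ∘L B ∘L P m‖ * ‖x‖) :=
            mul_le_mul_of_nonneg_left
              (ContinuousLinearMap.le_opNorm _ _) (norm_nonneg _)
        _ ≤ (NA / jap ((n:ℤ) - k) ^ 2) * ((NB / jap ((k:ℤ) - m)) * ‖x‖) := by
            apply mul_le_mul (hblockA n k)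
            · exact mul_le_mul_of_nonneg_right (hblockB k m) (norm_nonneg x)
            · exact mul_nonneg (norm_nonneg _) (norm_nonneg _)
            · exact div_nonneg hNA0 (pow_nonneg (jap_nonneg _) 2)
        _ = (NA * NB * ‖x‖ / jap d) * (jap d / (jap ((n:ℤ) - k) ^ 2 * jap ((k:ℤ) - m))) := by
            field_simp
    have hsummable : Summable (fun k : ℕ =>
        (NA * NB * ‖x‖ / jap d) * (jap d / (jap ((n:ℤ) - k) ^ 2 * jap ((k:ℤ) - m)))) :=
      (core_summable n m).mul_left _
    have hsummable_norm : Summable (fun k : ℕ => ‖(P n ∘L A) (P k y)‖) :=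
      Summable.of_nonneg_of_le (fun k => norm_nonneg _) hbound hsummable
    have h2 : ‖T x‖ ≤ ∑' k : ℕ, ‖(P n ∘L A) (P k y)‖ := by
      rw [hTx, ← hsum.tsum_eq]
      exact norm_tsum_le_tsum_norm hsummable_norm
    have h3 : ∑' k : ℕ, ‖(P n ∘L A) (P k y)‖ ≤
        (NA * NB * ‖x‖ / jap d) *
          ∑' k : ℕ, jap d / (jap ((n:ℤ) - k) ^ 2 * jap ((k:ℤ) - m)) := by
      rw [← tsum_mul_left]
      exact Summable.tsum_le_tsum hbound hsummable_norm hsummable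
    have hC0 : 0 ≤ NA * NB * ‖x‖ / jap d :=
      div_nonneg (mul_nonneg (mul_nonneg hNA0 hNB0) (norm_nonneg _)) hjd.le
    have h4 : (NA * NB * ‖x‖ / jap d) *
          (∑' k : ℕ, jap d / (jap ((n:ℤ) - k) ^ 2 * jap ((k:ℤ) - m)))
        ≤ (NA * NB * ‖x‖ / jap d) * K := by
      apply mul_le_mul_of_nonneg_left ?_ hC0
      rw [hK, hd]
      exact core_tsum n m
    calc ‖T x‖ ≤ (NA * NB * ‖x‖ / jap d) * K := le_trans h2 (le_trans h3 h4)
      _ = K * NA * NB / jap d * ‖x‖ := by ring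
  calc jap d * ‖T‖ ≤ jap d * (K * NA * NB / jap d) :=
        mul_le_mul_of_nonneg_left hTle hjd.le
    _ = K * (NA * NB) := by
        field_simp
end

section
/- For all integers m, n ≥ 1, the quantity a_{m,n} := (m+n)!/(2^{m+n} n! m!) satisfies a_{m,n} ≤ c · (m+n)/√((m+n)² − (m−n)²) · exp(−(m−n)²/(2(m+n))) for some absolute constant c > 0. -/
open Real

private lemma psi_nonneg {t : ℝ} (h0 : 0 ≤ t) (h1 : t < 1) :
    0 ≤ Real.log (1 + t) - Real.log (1 - t) - 2 * t := by
  set f : ℝ → ℝ := fun u => Real.log (1 + u) - Real.log (1 - u) - 2 * u with hf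
  have hderiv : ∀ x ∈ Set.Ioo (0:ℝ) 1,
      HasDerivAt f (1 / (1 + x) - (-1) / (1 - x) - 2) x := by
    intro x hx
    have hx1 : (1:ℝ) + x ≠ 0 := by nlinarith [hx.1]
    have hx2 : (1:ℝ) - x ≠ 0 := by nlinarith [hx.2]
    have d1 : HasDerivAt (fun u : ℝ => Real.log (1 + u)) (1 / (1 + x)) x := by
      simpa using (((hasDerivAt_id x).const_add 1).log hx1)
    have d2 : HasDerivAt (fun u : ℝ => Real.log (1 - u)) ((-1) / (1 - x)) x := by
      simpa using (((hasDerivAt_id x).const_sub 1).log hx2)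
    have d3 : HasDerivAt (fun u : ℝ => 2 * u) 2 x := by
      simpa using ((hasDerivAt_id x).const_mul 2)
    exact (d1.sub d2).sub d3
  have hmono : MonotoneOn f (Set.Ico (0:ℝ) 1) := by
    apply monotoneOn_of_deriv_nonneg (convex_Ico 0 1)
    · apply ContinuousOn.sub
      apply ContinuousOn.sub
      · exact (Continuous.continuousOn (by continuity)).log
          (fun x hx => by nlinarith [hx.1, hx.2])
      · exact (Continuous.continuousOn (by continuity)).log
          (fun x hx => by nlinarith [hx.1, hx.2])
      · exact continuousOn_const.mul continuousOn_id
    · intro x hx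
      rw [interior_Ico] at hx
      exact ((hderiv x hx).differentiableAt).differentiableWithinAt
    · intro x hx
      rw [interior_Ico] at hx
      rw [(hderiv x hx).deriv]
      have hx1 : (0:ℝ) < 1 + x := by nlinarith [hx.1]
      have hx2 : (0:ℝ) < 1 - x := by nlinarith [hx.2]
      have : 1 / (1 + x) - (-1) / (1 - x) - 2 = 2 * x ^ 2 / ((1 + x) * (1 - x)) := by
        field_simp
        ring
      rw [this]
      positivity
  have h00 : (0:ℝ) ∈ Set.Ico (0:ℝ) 1 := by constructor <;> norm_num
  have ht : t ∈ Set.Ico (0:ℝ) 1 := ⟨h0, h1⟩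
  have := hmono h00 ht h0
  simpa [hf] using this

private lemma phi_aux {t : ℝ} (h0 : 0 ≤ t) (h1 : t < 1) :
    t ^ 2 ≤ (1 + t) * Real.log (1 + t) + (1 - t) * Real.log (1 - t) := by
  set g : ℝ → ℝ := fun u => (1 + u) * Real.log (1 + u) + (1 - u) * Real.log (1 - u) - u ^ 2
    with hg
  have hderiv : ∀ x ∈ Set.Ioo (0:ℝ) 1,
      HasDerivAt g (Real.log (1 + x) - Real.log (1 - x) - 2 * x) x := by
    intro x hx
    have hx1 : (1:ℝ) + x ≠ 0 := by nlinarith [hx.1]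
    have hx2 : (1:ℝ) - x ≠ 0 := by nlinarith [hx.2]
    have a1 : HasDerivAt (fun u : ℝ => 1 + u) 1 x := by
      simpa using (hasDerivAt_id x).const_add 1
    have a2 : HasDerivAt (fun u : ℝ => 1 - u) (-1) x := by
      simpa using (hasDerivAt_id x).const_sub 1
    have d1 : HasDerivAt (fun u : ℝ => Real.log (1 + u)) (1 / (1 + x)) x := by
      simpa using (((hasDerivAt_id x).const_add 1).log hx1)
    have d2 : HasDerivAt (fun u : ℝ => Real.log (1 - u)) ((-1) / (1 - x)) x := by
      simpa using (((hasDerivAt_id x).const_sub 1).log hx2)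
    have d3 : HasDerivAt (fun u : ℝ => u ^ 2) (2 * x) x := by
      simpa using (hasDerivAt_pow 2 x)
    have := ((a1.mul d1).add (a2.mul d2)).sub d3
    refine this.congr_deriv ?_
    rw [mul_one_div_cancel hx1, mul_div_assoc', mul_neg_one, neg_div, div_self hx2]
    ring
  have hmono : MonotoneOn g (Set.Ico (0:ℝ) 1) := by
    apply monotoneOn_of_deriv_nonneg (convex_Ico 0 1)
    · apply ContinuousOn.sub
      apply ContinuousOn.add
      · exact (continuousOn_const.add continuousOn_id).mul
          ((Continuous.continuousOn (by continuity)).log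
            (fun x hx => by nlinarith [hx.1, hx.2]))
      · exact (continuousOn_const.sub continuousOn_id).mul
          ((Continuous.continuousOn (by continuity)).log
            (fun x hx => by nlinarith [hx.1, hx.2]))
      · exact (continuousOn_id.pow 2)
    · intro x hx
      rw [interior_Ico] at hx
      exact ((hderiv x hx).differentiableAt).differentiableWithinAt
    · intro x hx
      rw [interior_Ico] at hx
      rw [(hderiv x hx).deriv]
      exact psi_nonneg hx.1.le hx.2
  have h00 : (0:ℝ) ∈ Set.Ico (0:ℝ) 1 := by constructor <;> norm_num
  have ht : t ∈ Set.Ico (0:ℝ) 1 := ⟨h0, h1⟩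
  have := hmono h00 ht h0
  simp only [hg] at this
  norm_num at this
  linarith

private lemma phi_full {t : ℝ} (hlo : -1 < t) (hhi : t < 1) :
    t ^ 2 ≤ (1 + t) * Real.log (1 + t) + (1 - t) * Real.log (1 - t) := by
  rcases le_or_gt 0 t with h | h
  · exact phi_aux h hhi
  · have := phi_aux (t := -t) (by linarith) (by linarith)
    have e1 : 1 + -t = 1 - t := by ring
    have e2 : 1 - -t = 1 + t := by ring
    rw [e1, e2, neg_sq] at this
    linarith

private lemma key_entropy {a b : ℝ} (ha : 0 < a) (hb : 0 < b) :
    (a - b) ^ 2 / (2 * (a + b)) ≤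
      (a + b) * Real.log 2 + a * Real.log a + b * Real.log b
        - (a + b) * Real.log (a + b) := by
  have hs : (0:ℝ) < a + b := by linarith
  set t : ℝ := (a - b) / (a + b) with ht
  have hlo : -1 < t := by rw [ht, lt_div_iff₀ hs]; linarith
  have hhi : t < 1 := by rw [ht, div_lt_one hs]; linarith
  have h1t : 1 + t = 2 * a / (a + b) := by rw [ht]; field_simp; ring
  have h2t : 1 - t = 2 * b / (a + b) := by rw [ht]; field_simp; ring
  have hla : Real.log (1 + t) = Real.log 2 + Real.log a - Real.log (a + b) := by
    rw [h1t, Real.log_div (by positivity) (by positivity),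
      Real.log_mul (by norm_num) (by positivity)]
  have hlb : Real.log (1 - t) = Real.log 2 + Real.log b - Real.log (a + b) := by
    rw [h2t, Real.log_div (by positivity) (by positivity),
      Real.log_mul (by norm_num) (by positivity)]
  have hphi := phi_full hlo hhi
  have hmul := mul_le_mul_of_nonneg_left hphi (by positivity : (0:ℝ) ≤ (a + b) / 2)
  have hab : a - b = (a + b) * t := by rw [ht]; field_simp
  have lhs_eq : (a - b) ^ 2 / (2 * (a + b)) = (a + b) / 2 * t ^ 2 := by
    rw [hab]; field_simp
  have ea : (a + b) / 2 * (1 + t) = a := by rw [h1t]; field_simp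
  have eb : (a + b) / 2 * (1 - t) = b := by rw [h2t]; field_simp
  have rhs_eq : (a + b) / 2 * ((1 + t) * Real.log (1 + t) + (1 - t) * Real.log (1 - t))
      = (a + b) * Real.log 2 + a * Real.log a + b * Real.log b
        - (a + b) * Real.log (a + b) := by
    have : (a + b) / 2 * ((1 + t) * Real.log (1 + t) + (1 - t) * Real.log (1 - t))
        = ((a + b) / 2 * (1 + t)) * Real.log (1 + t)
          + ((a + b) / 2 * (1 - t)) * Real.log (1 - t) := by ring
    rw [this, ea, eb, hla, hlb]
    ring
  rw [lhs_eq, ← rhs_eq]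
  exact hmul

private lemma nat_choose_le (m n : ℕ) :
    (m + n).choose n * (n ^ n * m ^ m) ≤ (m + n) ^ (m + n) := by
  have h : (m + n) ^ (m + n) = ∑ k ∈ Finset.range (m + n + 1),
      n ^ k * m ^ (m + n - k) * (m + n).choose k := by
    rw [show m + n = n + m from add_comm m n]
    exact add_pow n m (n + m)
  rw [h]
  have hmem : n ∈ Finset.range (m + n + 1) := by
    rw [Finset.mem_range]; omega
  have := Finset.single_le_sum
    (f := fun k => n ^ k * m ^ (m + n - k) * (m + n).choose k)
    (fun i _ => Nat.zero_le _) hmem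
  simpa [Nat.add_sub_cancel, mul_comm, mul_assoc, mul_left_comm] using this

/-- For `m, n ≥ 1`, the quantity `a_{m,n} = (m+n)!/(2^{m+n} n! m!)` satisfies
`a_{m,n} ≤ c (m+n)/√((m+n)² − (m−n)²) · exp(−(m−n)²/(2(m+n)))`
for an absolute constant `c > 0`. -/
theorem a_mn_gaussian_bound :
    ∃ c : ℝ, 0 < c ∧ ∀ m n : ℕ, 1 ≤ m → 1 ≤ n →
      ((m + n).factorial : ℝ) / (2 ^ (m + n) * n.factorial * m.factorial) ≤
        c * ((m : ℝ) + n) / Real.sqrt (((m : ℝ) + n) ^ 2 - ((m : ℝ) - n) ^ 2) *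
          Real.exp (-((m : ℝ) - n) ^ 2 / (2 * ((m : ℝ) + n))) := by
  refine ⟨1, one_pos, ?_⟩
  intro m n hm hn
  have hx : (0:ℝ) < m := by exact_mod_cast hm
  have hy : (0:ℝ) < n := by exact_mod_cast hn
  set x : ℝ := (m : ℝ) with hxd
  set y : ℝ := (n : ℝ) with hyd
  -- step 1 : rewrite the LHS as choose / 2^N
  have hfac : ((m + n).factorial : ℝ) = ((m + n).choose n : ℝ) * n.factorial * m.factorial := by
    have h := Nat.choose_mul_factorial_mul_factorial (show n ≤ m + n from Nat.le_add_left n m)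
    rw [Nat.add_sub_cancel] at h
    exact_mod_cast h.symm
  have h1 : ((m + n).factorial : ℝ) / (2 ^ (m + n) * n.factorial * m.factorial)
      = ((m + n).choose n : ℝ) / 2 ^ (m + n) := by
    rw [hfac]
    have hnf : (n.factorial : ℝ) ≠ 0 := by positivity
    have hmf : (m.factorial : ℝ) ≠ 0 := by positivity
    field_simp
  -- step 2 : entropy bound on the binomial coefficient
  have h2 : ((m + n).choose n : ℝ) * (y ^ n * x ^ m) ≤ (x + y) ^ (m + n) := by
    have := nat_choose_le m n
    have hcast : (((m + n).choose n * (n ^ n * m ^ m) : ℕ) : ℝ)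
        ≤ (((m + n) ^ (m + n) : ℕ) : ℝ) := by exact_mod_cast this
    push_cast at hcast
    convert hcast using 2 <;> push_cast <;> ring
  have h2' : ((m + n).choose n : ℝ) / 2 ^ (m + n)
      ≤ (x + y) ^ (m + n) / (2 ^ (m + n) * x ^ m * y ^ n) := by
    rw [div_le_div_iff₀ (by positivity) (by positivity)]
    have h2p : (0:ℝ) < 2 ^ (m + n) := by positivity
    nlinarith [h2, h2p, (Nat.cast_nonneg ((m + n).choose n) : (0:ℝ) ≤ ((m + n).choose n : ℝ))]
  -- step 3 : the core exponential bound
  have hcore : (x + y) ^ (m + n) / (2 ^ (m + n) * x ^ m * y ^ n)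
      ≤ Real.exp (-(x - y) ^ 2 / (2 * (x + y))) := by
    rw [div_le_iff₀ (by positivity)]
    have hposL : (0:ℝ) < (x + y) ^ (m + n) := by positivity
    have hposR : (0:ℝ) < Real.exp (-(x - y) ^ 2 / (2 * (x + y)))
        * (2 ^ (m + n) * x ^ m * y ^ n) := by positivity
    rw [← Real.log_le_log_iff hposL hposR]
    rw [Real.log_mul (by positivity) (by positivity), Real.log_exp,
      Real.log_mul (by positivity) (by positivity),
      Real.log_mul (by positivity) (by positivity),
      Real.log_pow, Real.log_pow, Real.log_pow, Real.log_pow]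
    have hkey := key_entropy hx hy
    have hcast1 : ((m + n : ℕ) : ℝ) = x + y := by push_cast; ring
    have hcast2 : ((m : ℕ) : ℝ) = x := rfl
    have hcast3 : ((n : ℕ) : ℝ) = y := rfl
    simp only [hcast1, hcast2, hcast3]
    have : -(x - y) ^ 2 / (2 * (x + y)) = -((x - y) ^ 2 / (2 * (x + y))) := by ring
    rw [this]
    linarith
  -- step 4 : the prefactor is at least 1
  have hsq : (0:ℝ) < (x + y) ^ 2 - (x - y) ^ 2 := by nlinarith
  have hsqrtpos : (0:ℝ) < Real.sqrt ((x + y) ^ 2 - (x - y) ^ 2) := Real.sqrt_pos.mpr hsq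
  have h4 : (1:ℝ) ≤ 1 * (x + y) / Real.sqrt ((x + y) ^ 2 - (x - y) ^ 2) := by
    rw [one_mul, le_div_iff₀ hsqrtpos, one_mul]
    calc Real.sqrt ((x + y) ^ 2 - (x - y) ^ 2) ≤ Real.sqrt ((x + y) ^ 2) :=
          Real.sqrt_le_sqrt (by nlinarith)
      _ = x + y := Real.sqrt_sq (by positivity)
  calc ((m + n).factorial : ℝ) / (2 ^ (m + n) * n.factorial * m.factorial)
      = ((m + n).choose n : ℝ) / 2 ^ (m + n) := h1
    _ ≤ (x + y) ^ (m + n) / (2 ^ (m + n) * x ^ m * y ^ n) := h2'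
    _ ≤ Real.exp (-(x - y) ^ 2 / (2 * (x + y))) := hcore
    _ ≤ 1 * (x + y) / Real.sqrt ((x + y) ^ 2 - (x - y) ^ 2)
          * Real.exp (-(x - y) ^ 2 / (2 * (x + y))) :=
        le_mul_of_one_le_left (Real.exp_pos _).le h4
end

section
/- There exists a constant c > 0 such that for all nonnegative integers m, n: (m+n)!/(2^{m+n} n! m!) ≤ c/⟨m−n⟩, where ⟨a⟩ := max(1, |a|). -/
open Real

private lemma choose_mono_half {N r s : ℕ} (hrs : r ≤ s) (hs : s ≤ N / 2) :
    N.choose r ≤ N.choose s := by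
  induction s, hrs using Nat.le_induction with
  | base => exact le_refl _
  | succ k hk ih =>
    exact (ih (by omega)).trans (Nat.choose_le_succ_of_lt_half_left (by omega))

private lemma choose_le_choose_of_mem {N n k : ℕ} (h1 : n ≤ k) (h2 : k ≤ N - n)
    (hn : n ≤ N) : N.choose n ≤ N.choose k := by
  rcases le_or_gt k (N / 2) with hk | hk
  · exact choose_mono_half h1 hk
  · rw [← Nat.choose_symm (by omega : k ≤ N)]
    exact choose_mono_half (by omega) (by omega)

private lemma key (m n : ℕ) (h : n ≤ m) :
    (m - n + 1) * (m + n).choose n ≤ 2 ^ (m + n) := by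
  have hsub : Finset.Icc n m ⊆ Finset.range (m + n + 1) := by
    intro k hk
    simp only [Finset.mem_Icc] at hk
    simp only [Finset.mem_range]
    omega
  calc (m - n + 1) * (m + n).choose n
      = ∑ k ∈ Finset.Icc n m, (m + n).choose n := by
        rw [Finset.sum_const, Nat.card_Icc, smul_eq_mul]
        congr 1
        omega
    _ ≤ ∑ k ∈ Finset.Icc n m, (m + n).choose k := by
        refine Finset.sum_le_sum fun k hk => ?_
        simp only [Finset.mem_Icc] at hk
        exact choose_le_choose_of_mem hk.1 (by omega) (by omega)
    _ ≤ ∑ k ∈ Finset.range (m + n + 1), (m + n).choose k :=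
        Finset.sum_le_sum_of_subset hsub
    _ = 2 ^ (m + n) := Nat.sum_range_choose _

private lemma main (m n : ℕ) (h : n ≤ m) :
    ((m + n).factorial : ℝ) / (2 ^ (m + n) * n.factorial * m.factorial) ≤
      1 / jap ((m : ℤ) - n) := by
  have hfac : ((m + n).factorial : ℝ) =
      ((m + n).choose n : ℝ) * n.factorial * m.factorial := by
    have := Nat.choose_mul_factorial_mul_factorial (by omega : n ≤ m + n)
    rw [Nat.add_sub_cancel] at this
    exact_mod_cast this.symm
  have hd : ((m - n : ℕ) : ℝ) = (m : ℝ) - n := by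
    push_cast [Nat.cast_sub h]
    ring
  have hd0 : (0 : ℝ) ≤ (m : ℝ) - n := by
    have := (Nat.cast_le (α := ℝ)).mpr h
    linarith
  have hj : jap ((m : ℤ) - n) ≤ ((m - n : ℕ) : ℝ) + 1 := by
    simp only [jap]
    push_cast
    rw [abs_of_nonneg hd0, hd]
    exact max_le (by linarith) (by linarith)
  have hjpos : 0 < jap ((m : ℤ) - n) := lt_of_lt_of_le one_pos (le_max_left _ _)
  have hkey : ((m - n + 1 : ℕ) : ℝ) * ((m + n).choose n : ℝ) ≤ 2 ^ (m + n) := by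
    have := key m n h
    calc ((m - n + 1 : ℕ) : ℝ) * ((m + n).choose n : ℝ)
        = (((m - n + 1) * (m + n).choose n : ℕ) : ℝ) := by push_cast; ring
      _ ≤ ((2 ^ (m + n) : ℕ) : ℝ) := by exact_mod_cast this
      _ = 2 ^ (m + n) := by push_cast; ring
  rw [hfac]
  have hfpos : (0 : ℝ) < n.factorial * m.factorial := by positivity
  have h2 : (0 : ℝ) < 2 ^ (m + n) := by positivity
  rw [show ((2:ℝ) ^ (m + n) * n.factorial * m.factorial)
      = (2 ^ (m + n)) * (n.factorial * m.factorial) by ring,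
    show (((m + n).choose n : ℝ) * n.factorial * m.factorial)
      = ((m + n).choose n : ℝ) * (n.factorial * m.factorial) by ring,
    mul_div_mul_right _ _ (ne_of_gt hfpos)]
  rw [div_le_div_iff₀ h2 hjpos]
  calc ((m + n).choose n : ℝ) * jap ((m : ℤ) - n)
      ≤ ((m + n).choose n : ℝ) * (((m - n : ℕ) : ℝ) + 1) := by
        exact mul_le_mul_of_nonneg_left hj (by positivity)
    _ = ((m - n + 1 : ℕ) : ℝ) * ((m + n).choose n : ℝ) := by push_cast; ring
    _ ≤ 2 ^ (m + n) := hkey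
    _ = 1 * 2 ^ (m + n) := by ring

/-- There is `c > 0` with `(m+n)!/(2^{m+n} n! m!) ≤ c/⟨m−n⟩` for all `m, n ∈ ℕ₀`. -/
theorem a_mn_decay_bound :
    ∃ c : ℝ, 0 < c ∧ ∀ m n : ℕ,
      ((m + n).factorial : ℝ) / (2 ^ (m + n) * n.factorial * m.factorial) ≤
        c / jap ((m : ℤ) - n) := by
  refine ⟨1, one_pos, fun m n => ?_⟩
  rcases le_total n m with h | h
  · exact main m n h
  · have := main n m h
    have hjap : jap ((m : ℤ) - n) = jap ((n : ℤ) - m) := by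
      simp only [jap]
      rw [show ((((m : ℤ) - n) : ℤ) : ℝ) = -((((n : ℤ) - m) : ℤ) : ℝ) by push_cast; ring,
        abs_neg]
    rw [hjap, show m + n = n + m by ring]
    calc ((n + m).factorial : ℝ) / (2 ^ (n + m) * n.factorial * m.factorial)
        = ((n + m).factorial : ℝ) / (2 ^ (n + m) * m.factorial * n.factorial) := by ring_nf
      _ ≤ 1 / jap ((n : ℤ) - m) := this
end

section
/- There exists a constant c > 0 such that for all m, n ∈ ℕ₀ and all integers l ≥ −min(m, n): (l+m+n)! / (2^{l+m+n+1} √((l+m)!(l+n)! n! m!)) ≤ c/⟨m−n⟩. -/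
open Real

lemma lemA {N a c : ℕ} (hac : a ≤ c) (hcN : c + 1 ≤ N) :
    N.choose a * N.choose (c+1) ≤ N.choose (a+1) * N.choose c := by
  have h1 : N.choose (a+1) * (a+1) = N.choose a * (N - a) := Nat.choose_succ_right_eq N a
  have h2 : N.choose (c+1) * (c+1) = N.choose c * (N - c) := Nat.choose_succ_right_eq N c
  have key : (N - c) * (a+1) ≤ (N - a) * (c+1) := Nat.mul_le_mul (by omega) (by omega)
  apply Nat.le_of_mul_le_mul_right _ (show 0 < (a+1)*(c+1) by positivity)
  calc N.choose a * N.choose (c+1) * ((a+1)*(c+1))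
      = (N.choose a) * (N.choose (c+1) * (c+1)) * (a+1) := by ring
    _ = (N.choose a) * (N.choose c * (N - c)) * (a+1) := by rw [h2]
    _ = (N.choose a * N.choose c) * ((N - c) * (a+1)) := by ring
    _ ≤ (N.choose a * N.choose c) * ((N - a) * (c+1)) := Nat.mul_le_mul_left _ key
    _ = (N.choose a * (N - a)) * (N.choose c) * (c+1) := by ring
    _ = (N.choose (a+1) * (a+1)) * (N.choose c) * (c+1) := by rw [h1]
    _ = N.choose (a+1) * N.choose c * ((a+1)*(c+1)) := by ring

lemma lemB' {N n d : ℕ} (hdN : n + d ≤ N) :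
    ∀ j, 2*j ≤ d → N.choose n * N.choose (n+d) ≤ N.choose (n+j) * N.choose (n+(d-j)) := by
  intro j
  induction j with
  | zero => intro _; simp
  | succ j ih =>
    intro hj
    refine le_trans (ih (by omega)) ?_
    have h1 : n + (d - j) = (n + (d - (j+1))) + 1 := by omega
    have e1 : n + (j+1) = (n+j)+1 := by omega
    rw [h1, e1]
    exact lemA (by omega) (by omega)

lemma lemB {N n d j : ℕ} (hdN : n + d ≤ N) (hj : j ≤ d) :
    N.choose n * N.choose (n+d) ≤ N.choose (n+j) * N.choose (n+(d-j)) := by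
  rcases le_or_gt (2*j) d with h | h
  · exact lemB' hdN j h
  · have h2 := lemB' hdN (d-j) (by omega)
    have e : d - (d - j) = j := by omega
    rw [e] at h2
    exact h2.trans (le_of_eq (mul_comm _ _))

lemma sqrt_amgm (a b : ℝ) (ha : 0 ≤ a) (hb : 0 ≤ b) : 2 * Real.sqrt (a*b) ≤ a + b := by
  have h4 : (4:ℝ)*(a*b) = 2^2*(a*b) := by ring
  calc 2 * Real.sqrt (a*b) = Real.sqrt (2^2) * Real.sqrt (a*b) := by
        rw [Real.sqrt_sq (by norm_num : (0:ℝ) ≤ 2)]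
    _ = Real.sqrt (2^2 * (a*b)) := (Real.sqrt_mul (by positivity) _).symm
    _ ≤ Real.sqrt ((a+b)^2) := Real.sqrt_le_sqrt (by nlinarith [sq_nonneg (a-b)])
    _ = a + b := Real.sqrt_sq (by linarith)

lemma lemD {N n d : ℕ} (hdN : n + d ≤ N) :
    ((d : ℝ) + 1) * Real.sqrt ((N.choose n : ℝ) * N.choose (n+d)) ≤ 2 ^ N := by
  have hsum_nat : ∑ j ∈ Finset.range (d+1), N.choose (n+j) ≤ 2 ^ N := by
    have h1 : ∑ j ∈ Finset.range (d+1), N.choose (n+j)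
        = ∑ i ∈ Finset.Ico n (n+(d+1)), N.choose i := by
      rw [Finset.sum_Ico_eq_sum_range]
      simp only [Nat.add_sub_cancel_left]
    rw [h1]
    calc ∑ i ∈ Finset.Ico n (n+(d+1)), N.choose i
        ≤ ∑ i ∈ Finset.range (N+1), N.choose i := by
          apply Finset.sum_le_sum_of_subset
          intro x hx
          simp only [Finset.mem_Ico] at hx
          simp only [Finset.mem_range]
          omega
      _ = 2 ^ N := Nat.sum_range_choose N
  set c : ℕ → ℝ := fun j => (N.choose (n+j) : ℝ) with hc
  have hterm : ∀ j ∈ Finset.range (d+1),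
      2 * Real.sqrt ((N.choose n : ℝ) * N.choose (n+d)) ≤ c j + c (d - j) := by
    intro j hj
    simp only [Finset.mem_range] at hj
    have hB : N.choose n * N.choose (n+d) ≤ N.choose (n+j) * N.choose (n+(d-j)) :=
      lemB hdN (by omega)
    calc 2 * Real.sqrt ((N.choose n : ℝ) * N.choose (n+d))
        ≤ 2 * Real.sqrt ((N.choose (n+j) : ℝ) * N.choose (n+(d-j))) := by
          have : ((N.choose n : ℝ) * N.choose (n+d)) ≤ (N.choose (n+j) : ℝ) * N.choose (n+(d-j)) := by
            exact_mod_cast hB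
          have := Real.sqrt_le_sqrt this
          linarith
      _ ≤ c j + c (d - j) := sqrt_amgm _ _ (by positivity) (by positivity)
  have hrefl : ∑ j ∈ Finset.range (d+1), c (d - j) = ∑ j ∈ Finset.range (d+1), c j := by
    have := Finset.sum_range_reflect c (d+1)
    simpa using this
  have h2sum : ((d:ℝ)+1) * (2 * Real.sqrt ((N.choose n : ℝ) * N.choose (n+d)))
      ≤ 2 * ∑ j ∈ Finset.range (d+1), c j := by
    calc ((d:ℝ)+1) * (2 * Real.sqrt ((N.choose n : ℝ) * N.choose (n+d)))
        = ∑ _j ∈ Finset.range (d+1), 2 * Real.sqrt ((N.choose n : ℝ) * N.choose (n+d)) := by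
          rw [Finset.sum_const, Finset.card_range]; push_cast; ring
      _ ≤ ∑ j ∈ Finset.range (d+1), (c j + c (d - j)) := Finset.sum_le_sum hterm
      _ = ∑ j ∈ Finset.range (d+1), c j + ∑ j ∈ Finset.range (d+1), c (d - j) :=
          Finset.sum_add_distrib
      _ = 2 * ∑ j ∈ Finset.range (d+1), c j := by rw [hrefl]; ring
  have hsum_real : ∑ j ∈ Finset.range (d+1), c j ≤ 2 ^ N := by
    calc ∑ j ∈ Finset.range (d+1), c j
        = ((∑ j ∈ Finset.range (d+1), N.choose (n+j) : ℕ) : ℝ) := by push_cast; rfl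
      _ ≤ ((2^N : ℕ) : ℝ) := by exact_mod_cast hsum_nat
      _ = 2 ^ N := by norm_cast
  nlinarith [h2sum, hsum_real]

lemma mainIneq (m n : ℕ) (l : ℤ) (h : -(min m n : ℤ) ≤ l) (hnm : n ≤ m) :
    ((l + m + n).toNat.factorial : ℝ) / (2 ^ ((l + m + n).toNat + 1) *
      Real.sqrt (((l + m).toNat.factorial : ℝ) * (l + n).toNat.factorial *
        n.factorial * m.factorial)) ≤ (1/2) / jap ((m : ℤ) - n) := by
  have hln : (0:ℤ) ≤ l + n := by omega
  have hlm : (0:ℤ) ≤ l + m := by omega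
  set B := (l + m).toNat with hB
  set A := (l + n).toNat with hA
  set N := (l + m + n).toNat with hN
  have hNB : N = B + n := by omega
  have hNA : N = A + m := by omega
  set d := m - n with hd
  have hc1 : N.choose n * n.factorial * B.factorial = N.factorial := by
    have h1 := Nat.choose_mul_factorial_mul_factorial (show n ≤ N by omega)
    rwa [show N - n = B by omega] at h1
  have hc2 : N.choose m * m.factorial * A.factorial = N.factorial := by
    have h1 := Nat.choose_mul_factorial_mul_factorial (show m ≤ N by omega)
    rwa [show N - m = A by omega] at h1
  have hsqN : N.factorial * N.factorial
      = (N.choose n * N.choose m) * (B.factorial * A.factorial * n.factorial * m.factorial) := by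
    calc N.factorial * N.factorial
        = (N.choose n * n.factorial * B.factorial) * (N.choose m * m.factorial * A.factorial) := by
          rw [hc1, hc2]
      _ = (N.choose n * N.choose m) * (B.factorial * A.factorial * n.factorial * m.factorial) := by
          ring
  set P : ℝ := (B.factorial : ℝ) * A.factorial * n.factorial * m.factorial with hP
  have hPpos : 0 < P := by positivity
  have hfac2 : (N.factorial : ℝ) * N.factorial = ((N.choose n : ℝ) * N.choose m) * P := by
    have hcast : ((N.factorial * N.factorial : ℕ) : ℝ)
        = ((N.choose n * N.choose m * (B.factorial * A.factorial * n.factorial * m.factorial) : ℕ) : ℝ) := by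
      exact_mod_cast hsqN
    push_cast at hcast
    rw [hP]
    linarith [hcast]
  have hfac : (N.factorial : ℝ)
      = Real.sqrt ((N.choose n : ℝ) * N.choose m) * Real.sqrt P := by
    rw [← Real.sqrt_mul (by positivity) P, ← hfac2,
      Real.sqrt_mul_self (by positivity)]
  have hkey : ((d : ℝ) + 1) * Real.sqrt ((N.choose n : ℝ) * N.choose m) ≤ 2 ^ N := by
    have := lemD (N := N) (n := n) (d := d) (by omega)
    rwa [show n + d = m by omega] at this
  have hjap : jap ((m : ℤ) - n) = max 1 ((m:ℝ) - n) := by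
    unfold jap
    congr 1
    rw [abs_of_nonneg]
    · push_cast; ring
    · push_cast
      have : (n:ℝ) ≤ m := by exact_mod_cast hnm
      linarith
  have hjpos : (0:ℝ) < jap ((m : ℤ) - n) := by
    rw [hjap]; exact lt_of_lt_of_le one_pos (le_max_left _ _)
  have hjle : jap ((m : ℤ) - n) ≤ (d:ℝ) + 1 := by
    rw [hjap]
    have hdc : (d:ℝ) = (m:ℝ) - n := by
      push_cast [hd, Nat.cast_sub hnm]; ring
    apply max_le
    · have : (n:ℝ) ≤ m := by exact_mod_cast hnm
      linarith
    · linarith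
  -- rewrite LHS
  rw [hfac]
  have hsqrtP : (0:ℝ) < Real.sqrt P := Real.sqrt_pos.mpr hPpos
  have h2pow : (0:ℝ) < 2 ^ (N+1) := by positivity
  rw [div_le_div_iff₀ (by positivity) hjpos]
  -- goal: √CC * √P * jap ≤ 1/2 * (2^(N+1) * √P)
  have hs : (0:ℝ) ≤ Real.sqrt ((N.choose n : ℝ) * N.choose m) := Real.sqrt_nonneg _
  calc Real.sqrt ((N.choose n : ℝ) * N.choose m) * Real.sqrt P * jap ((m : ℤ) - n)
      ≤ Real.sqrt ((N.choose n : ℝ) * N.choose m) * Real.sqrt P * ((d:ℝ)+1) := by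
        apply mul_le_mul_of_nonneg_left hjle (by positivity)
    _ = (((d:ℝ)+1) * Real.sqrt ((N.choose n : ℝ) * N.choose m)) * Real.sqrt P := by ring
    _ ≤ (2:ℝ)^N * Real.sqrt P := by
        apply mul_le_mul_of_nonneg_right hkey (le_of_lt hsqrtP)
    _ = 1/2 * (2 ^ (N+1) * Real.sqrt P) := by ring

/-- There is `c > 0` such that for all `m, n ∈ ℕ₀` and integers `l ≥ −min(m,n)`:
`(l+m+n)! / (2^{l+m+n+1} √((l+m)!(l+n)! n! m!)) ≤ c/⟨m−n⟩`. -/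
theorem b_lmn_decay_bound :
    ∃ c : ℝ, 0 < c ∧ ∀ (m n : ℕ) (l : ℤ), -(min m n : ℤ) ≤ l →
      ((l + m + n).toNat.factorial : ℝ) / (2 ^ ((l + m + n).toNat + 1) *
        Real.sqrt (((l + m).toNat.factorial : ℝ) * (l + n).toNat.factorial *
          n.factorial * m.factorial)) ≤ c / jap ((m : ℤ) - n) := by
  refine ⟨1/2, by norm_num, ?_⟩
  intro m n l h
  rcases le_total n m with hnm | hmn
  · exact mainIneq m n l h hnm
  · have h' : -(min n m : ℤ) ≤ l := by rwa [min_comm] at h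
    have key := mainIneq n m l h' hmn
    have e1 : l + n + m = l + m + n := by ring
    rw [e1] at key
    have e2 : jap ((n:ℤ) - m) = jap ((m:ℤ) - n) := by
      unfold jap
      congr 1
      rw [← abs_neg]
      congr 1
      push_cast
      ring
    rw [e2] at key
    have e3 : ((l + n).toNat.factorial : ℝ) * (l + m).toNat.factorial *
        m.factorial * n.factorial = ((l + m).toNat.factorial : ℝ) * (l + n).toNat.factorial *
        n.factorial * m.factorial := by ring
    rw [e3] at key
    exact key
end

section
/- Let ψ_{n,l}(r,Θ) = (−1)^n √(n!/(2^l (n+l)!)) r^l e^{iΘl} L_n^l(r²/2) e^{−r²/4}/√(2π) be the normalized Landau eigenfunctions and g(q) = e^{−q²/2}. Then for n, m ∈ ℕ₀ and l ≥ −min(n,m): |⟨ψ_{n,l}, g ψ_{m,l}⟩| = (1/2^{l+m+n+1}) (l+m+n)!/√((l+m)!(l+n)! n! m!). -/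
open Real MeasureTheory Finset

/-- The associated Laguerre polynomial `L_n^l(x) = ∑_{j=0}^n ((−x)^j/j!) C(n+l, n−j)`. -/
noncomputable def laguerre (n l : ℕ) (x : ℝ) : ℝ :=
  ∑ j ∈ Finset.range (n + 1), (-x) ^ j / j.factorial * ((n + l).choose (n - j))

/-- Associated Laguerre polynomials with integer upper index, extended to
`0 ≥ l ≥ −n` by `L_n^l(x) = ((n+l)!/n!) (−x)^{|l|} L_{n+l}^{|l|}(x)`. -/
noncomputable def laguerreZ (n : ℕ) (l : ℤ) (x : ℝ) : ℝ :=
  if 0 ≤ l then laguerre n l.toNat x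
  else ((n + l).toNat.factorial : ℝ) / n.factorial * (-x) ^ l.natAbs *
    laguerre (n + l).toNat l.natAbs x

/-- The normalized Landau eigenfunction
`ψ_{n,l}(r,Θ) = (−1)^n √(n!/(2^l (n+l)!)) r^l e^{iΘl} L_n^l(r²/2) e^{−r²/4}/√(2π)`. -/
noncomputable def landauEig (n : ℕ) (l : ℤ) (r Θ : ℝ) : ℂ :=
  (-1) ^ n *
    (Real.sqrt ((n.factorial : ℝ) / ((2 : ℝ) ^ l * (n + l).toNat.factorial)) : ℝ) *
    ((r ^ l : ℝ) : ℂ) * Complex.exp (Complex.I * Θ * l) *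
    (laguerreZ n l (r ^ 2 / 2) : ℝ) * ((Real.exp (-r ^ 2 / 4) / Real.sqrt (2 * π) : ℝ) : ℂ)

lemma sumB (m s : ℕ) (x : ℝ) :
    ∑ k ∈ range (m+1), (-1:ℝ)^k * x^k * (m.choose k) * (k.choose s)
      = (-1)^s * x^s * (1-x)^(m-s) * m.choose s := by
  by_cases hs : s ≤ m
  · rw [Finset.range_eq_Ico, ← Finset.sum_Ico_consecutive _ (Nat.zero_le s) (by omega : s ≤ m+1)]
    have h0 : ∑ k ∈ Finset.Ico 0 s, (-1:ℝ)^k * x^k * (m.choose k) * (k.choose s) = 0 := by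
      apply Finset.sum_eq_zero
      intro k hk
      simp only [Finset.mem_Ico] at hk
      rw [Nat.choose_eq_zero_of_lt hk.2]
      simp
    rw [h0, zero_add, Finset.sum_Ico_eq_sum_range]
    have h1 : m + 1 - s = (m - s) + 1 := by omega
    rw [h1]
    have h2 : ∀ i ∈ range (m - s + 1),
        (-1:ℝ)^(s+i) * x^(s+i) * (m.choose (s+i)) * ((s+i).choose s)
        = ((-1:ℝ)^s * x^s * m.choose s) * ((-1)^i * x^i * ((m-s).choose i)) := by
      intro i hi
      simp only [Finset.mem_range] at hi
      have : m.choose (s+i) * (s+i).choose s = m.choose s * (m-s).choose i := by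
        have := Nat.choose_mul (n := m) (show s ≤ s + i by omega)
        simpa using this
      have hc : ((m.choose (s+i)) * ((s+i).choose s) : ℝ) = (m.choose s) * ((m-s).choose i) := by
        exact_mod_cast congrArg (Nat.cast : ℕ → ℝ) this
      rw [pow_add, pow_add]
      linear_combination ((-1:ℝ)^s*(-1)^i*x^s*x^i) * hc
    rw [Finset.sum_congr rfl h2, ← Finset.mul_sum]
    have h3 : ∑ i ∈ range (m - s + 1), (-1:ℝ)^i * x^i * ((m-s).choose i) = (1-x)^(m-s) := by
      rw [sub_eq_add_neg, add_comm (1:ℝ) (-x), add_pow]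
      apply Finset.sum_congr rfl
      intro i hi
      rw [neg_pow]
      ring
    rw [h3]; ring
  · rw [Nat.choose_eq_zero_of_lt (by omega)]
    rw [Finset.sum_eq_zero]
    · simp
    intro k hk
    simp only [Finset.mem_range] at hk
    rw [Nat.choose_eq_zero_of_lt (show k < s by omega)]
    simp
lemma vander (l n m : ℕ) :
    (l+n+m).choose n = ∑ t ∈ range (n+1), (l+n).choose (n-t) * m.choose t := by
  have h := Nat.add_choose_eq (l+n) m n
  rw [Finset.Nat.sum_antidiagonal_eq_sum_range_succ_mk] at h
  rw [h, ← Finset.sum_range_reflect]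
  apply Finset.sum_congr rfl
  intro t ht
  simp only [Finset.mem_range] at ht
  congr 1 <;> congr 1 <;> omega
lemma term2 (l n t : ℕ) (ht : t ≤ n) :
    n.choose t * t.factorial * (l+n).factorial
      = n.factorial * ((l+n).choose (n-t) * (l+t).factorial) := by
  have h1 : n.choose t * t.factorial * (n-t).factorial = n.factorial :=
    Nat.choose_mul_factorial_mul_factorial ht
  have h2 : (l+n).choose (n-t) * (n-t).factorial * (l+t).factorial = (l+n).factorial := by
    have := Nat.choose_mul_factorial_mul_factorial (show n - t ≤ l + n by omega)
    rwa [show l + n - (n - t) = l + t by omega] at this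
  have hpos : 0 < (n-t).factorial := Nat.factorial_pos _
  apply Nat.eq_of_mul_eq_mul_right hpos
  calc n.choose t * t.factorial * (l+n).factorial * (n-t).factorial
      = (n.choose t * t.factorial * (n-t).factorial) * (l+n).factorial := by ring
    _ = n.factorial * ((l+n).choose (n-t) * (n-t).factorial * (l+t).factorial) := by rw [h1, ← h2]
    _ = n.factorial * ((l+n).choose (n-t) * (l+t).factorial) * (n-t).factorial := by ring
lemma sumC (l n m : ℕ) :
    ∑ t ∈ range (n+1), (n.choose t : ℝ) * (m.choose t) * t.factorial / (l+t).factorial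
      = (l+n+m).factorial / ((l+n).factorial * (l+m).factorial) := by
  have key : ∀ t ∈ range (n+1),
      (n.choose t : ℝ) * (m.choose t) * t.factorial / (l+t).factorial
        = (n.factorial : ℝ) / (l+n).factorial * (((l+n).choose (n-t)) * (m.choose t)) := by
    intro t ht
    simp only [Finset.mem_range] at ht
    have h := term2 l n t (by omega)
    have hc : ((n.choose t * t.factorial * (l+n).factorial : ℕ) : ℝ)
        = ((n.factorial * ((l+n).choose (n-t) * (l+t).factorial) : ℕ) : ℝ) := by exact_mod_cast h
    push_cast at hc
    have h1 : ((l+t).factorial : ℝ) ≠ 0 := by positivity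
    have h2 : ((l+n).factorial : ℝ) ≠ 0 := by positivity
    field_simp
    linear_combination (m.choose t : ℝ) * hc
  rw [Finset.sum_congr rfl key, ← Finset.mul_sum]
  have hv : ∑ t ∈ range (n+1), ((l+n).choose (n-t) : ℝ) * (m.choose t) = (l+n+m).choose n := by
    rw [vander l n m]; push_cast; ring
  rw [hv]
  have h3 : (l+n+m).choose n * n.factorial * (l+m).factorial = (l+n+m).factorial := by
    have := Nat.choose_mul_factorial_mul_factorial (show n ≤ l + n + m by omega)
    rwa [show l + n + m - n = l + m by omega] at this
  have hc3 : ((l+n+m).choose n : ℝ) * n.factorial * (l+m).factorial = (l+n+m).factorial := by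
    exact_mod_cast congrArg (Nat.cast : ℕ → ℝ) h3
  have h1 : (n.factorial : ℝ) ≠ 0 := by positivity
  have h2 : ((l+n).factorial : ℝ) ≠ 0 := by positivity
  have h4 : ((l+m).factorial : ℝ) ≠ 0 := by positivity
  field_simp
  linear_combination hc3
lemma sumB' (n t : ℕ) :
    ∑ j ∈ range (n+1), (-1:ℝ)^j * (2⁻¹)^j * (n.choose j) * (j.choose t)
      = (-1)^t * (2⁻¹)^n * (n.choose t) := by
  rw [sumB n t 2⁻¹]
  by_cases ht : t ≤ n
  · rw [show (1 - 2⁻¹ : ℝ) = 2⁻¹ by norm_num, show n = t + (n - t) by omega]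
    rw [pow_add]
    ring_nf
    rw [show t + (n-t) - t = n - t by omega]
  · rw [Nat.choose_eq_zero_of_lt (show n < t by omega)]
    simp

/-- symmetric middle sum -/
lemma sum_mid_symm (l n m : ℕ) :
    ∑ t ∈ range (m+1), (n.choose t : ℝ) * (m.choose t) * t.factorial / (l+t).factorial
      = ∑ t ∈ range (n+1), (n.choose t : ℝ) * (m.choose t) * t.factorial / (l+t).factorial := by
  have hz : ∀ N : ℕ, ∀ t ∈ range (n+m+2) \ range (N+1),
      ((min N (n+m+1)).choose t : ℝ) = 0 → True := fun _ _ _ _ => trivial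
  have ext : ∀ N, N ≤ n + m + 1 → ((N = n) ∨ (N = m)) →
      ∑ t ∈ range (N+1), (n.choose t : ℝ) * (m.choose t) * t.factorial / (l+t).factorial
      = ∑ t ∈ range (n+m+2), (n.choose t : ℝ) * (m.choose t) * t.factorial / (l+t).factorial := by
    intro N hN hOr
    apply Finset.sum_subset
    · intro t ht; simp only [Finset.mem_range] at *; omega
    · intro t ht hnt
      simp only [Finset.mem_range, not_lt] at ht hnt
      rcases hOr with h | h
      · rw [Nat.choose_eq_zero_of_lt (show n < t by omega)]; simp
      · rw [Nat.choose_eq_zero_of_lt (show m < t by omega)]; simp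
  rw [ext m (by omega) (Or.inr rfl), ext n (by omega) (Or.inl rfl)]
lemma keyA (l n m : ℕ) :
    ∑ j ∈ range (n+1), ∑ k ∈ range (m+1),
      (-1:ℝ)^(j+k) * (2⁻¹)^(j+k) * (n.choose j) * (m.choose k) * ((l+j+k).factorial)
        / ((l+j).factorial * (l+k).factorial)
    = (2⁻¹)^(n+m) * ((l+n+m).factorial / ((l+n).factorial * (l+m).factorial)) := by
  -- Stage 1: expand the factorial ratio by Vandermonde
  have stage1 : ∀ j ∈ range (n+1), ∀ k ∈ range (m+1),
      (-1:ℝ)^(j+k) * (2⁻¹)^(j+k) * (n.choose j) * (m.choose k) * ((l+j+k).factorial)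
        / ((l+j).factorial * (l+k).factorial)
      = ∑ t ∈ range (k+1),
          ((-1:ℝ)^j * (2⁻¹)^j * (n.choose j) * (j.choose t)) *
          ((-1:ℝ)^k * (2⁻¹)^k * (m.choose k) *
            ((k.factorial : ℝ) * ((l+k).choose (k-t)) / (l+k).factorial)) := by
    intro j hj k hk
    have hfac : ((l+j+k).factorial : ℝ)
        = ((l+k+j).choose k : ℝ) * k.factorial * (l+j).factorial := by
      have h := Nat.choose_mul_factorial_mul_factorial (show k ≤ l+k+j by omega)
      rw [show l+k+j-k = l+j by omega] at h
      rw [show l+j+k = l+k+j by omega]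
      exact_mod_cast h.symm
    have hv : ((l+k+j).choose k : ℝ)
        = ∑ t ∈ range (k+1), ((l+k).choose (k-t) : ℝ) * (j.choose t) := by
      rw [vander l k j]; push_cast; ring
    rw [hfac, hv]
    simp only [Finset.sum_mul, Finset.mul_sum, Finset.sum_div]
    apply Finset.sum_congr rfl
    intro t ht
    have h1 : ((l+j).factorial : ℝ) ≠ 0 := by positivity
    have h2 : ((l+k).factorial : ℝ) ≠ 0 := by positivity
    field_simp
    ring
  rw [Finset.sum_congr rfl (fun j hj => Finset.sum_congr rfl (stage1 j hj))]
  -- Stage 2: swap the j-sum inside and evaluate it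
  rw [Finset.sum_comm]
  have stage2 : ∀ k ∈ range (m+1),
      (∑ j ∈ range (n+1), ∑ t ∈ range (k+1),
        ((-1:ℝ)^j * (2⁻¹)^j * (n.choose j) * (j.choose t)) *
        ((-1:ℝ)^k * (2⁻¹)^k * (m.choose k) *
          ((k.factorial : ℝ) * ((l+k).choose (k-t)) / (l+k).factorial)))
      = ∑ t ∈ range (k+1),
          ((-1:ℝ)^t * (2⁻¹)^n * (n.choose t)) *
          ((-1:ℝ)^k * (2⁻¹)^k * (m.choose k) *
            ((k.factorial : ℝ) * ((l+k).choose (k-t)) / (l+k).factorial)) := by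
    intro k hk
    rw [Finset.sum_comm]
    apply Finset.sum_congr rfl
    intro t ht
    rw [← Finset.sum_mul, sumB']
  rw [Finset.sum_congr rfl stage2]
  -- Stage 3: rewrite the (k,t) coefficient via term2
  have stage3 : ∀ k ∈ range (m+1), ∀ t ∈ range (k+1),
      ((-1:ℝ)^t * (2⁻¹)^n * (n.choose t)) *
        ((-1:ℝ)^k * (2⁻¹)^k * (m.choose k) *
          ((k.factorial : ℝ) * ((l+k).choose (k-t)) / (l+k).factorial))
      = (2⁻¹)^n * (((-1:ℝ)^k * (2⁻¹)^k * (m.choose k) * (k.choose t)) *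
          ((-1:ℝ)^t * ((n.choose t) * (t.factorial) / (l+t).factorial))) := by
    intro k hk t ht
    simp only [Finset.mem_range] at ht
    have h := term2 l k t (by omega)
    have hc : (k.choose t : ℝ) * t.factorial * (l+k).factorial
        = k.factorial * ((l+k).choose (k-t) * (l+t).factorial) := by exact_mod_cast h
    have h1 : ((l+k).factorial : ℝ) ≠ 0 := by positivity
    have h2 : ((l+t).factorial : ℝ) ≠ 0 := by positivity
    have hdiv : (k.factorial : ℝ) * ((l+k).choose (k-t)) / (l+k).factorial
        = (k.choose t) * t.factorial / (l+t).factorial := by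
      rw [div_eq_div_iff h1 h2]
      linear_combination -hc
    rw [hdiv]
    ring
  rw [Finset.sum_congr rfl (fun k hk => Finset.sum_congr rfl (stage3 k hk))]
  -- Stage 4: extend inner range to m+1, swap, evaluate k-sum by sumB'
  have stage4 : ∀ k ∈ range (m+1),
      ∑ t ∈ range (k+1), (2⁻¹:ℝ)^n * (((-1:ℝ)^k * (2⁻¹)^k * (m.choose k) * (k.choose t)) *
          ((-1:ℝ)^t * ((n.choose t) * (t.factorial) / (l+t).factorial)))
      = ∑ t ∈ range (m+1), (2⁻¹:ℝ)^n * (((-1:ℝ)^k * (2⁻¹)^k * (m.choose k) * (k.choose t)) *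
          ((-1:ℝ)^t * ((n.choose t) * (t.factorial) / (l+t).factorial))) := by
    intro k hk
    simp only [Finset.mem_range] at hk
    apply Finset.sum_subset
    · intro t ht; simp only [Finset.mem_range] at *; omega
    · intro t ht hnt
      simp only [Finset.mem_range, not_lt] at ht hnt
      rw [Nat.choose_eq_zero_of_lt (show k < t by omega)]
      simp
  rw [Finset.sum_congr rfl stage4, Finset.sum_comm]
  have stage5 : ∀ t ∈ range (m+1),
      ∑ k ∈ range (m+1), (2⁻¹:ℝ)^n * (((-1:ℝ)^k * (2⁻¹)^k * (m.choose k) * (k.choose t)) *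
          ((-1:ℝ)^t * ((n.choose t) * (t.factorial) / (l+t).factorial)))
      = (2⁻¹:ℝ)^(n+m) * ((n.choose t : ℝ) * (m.choose t) * t.factorial / (l+t).factorial) := by
    intro t ht
    have hre : ∀ k ∈ range (m+1),
        (2⁻¹:ℝ)^n * (((-1:ℝ)^k * (2⁻¹)^k * (m.choose k) * (k.choose t)) *
          ((-1:ℝ)^t * ((n.choose t) * (t.factorial) / (l+t).factorial)))
        = ((-1:ℝ)^k * (2⁻¹)^k * (m.choose k) * (k.choose t)) *
          ((2⁻¹:ℝ)^n * ((-1:ℝ)^t * ((n.choose t) * (t.factorial) / (l+t).factorial))) := by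
      intro k _
      ring
    rw [Finset.sum_congr rfl hre, ← Finset.sum_mul, sumB', pow_add]
    have hsq : ((-1:ℝ)^t) * ((-1:ℝ)^t) = 1 := by
      rw [← pow_add, ← two_mul, pow_mul]
      norm_num
    linear_combination ((2⁻¹:ℝ)^m * (m.choose t) * (2⁻¹)^n *
      ((n.choose t) * (t.factorial) / (l+t).factorial)) * hsq
  rw [Finset.sum_congr rfl stage5, ← Finset.mul_sum, sum_mid_symm l n m, sumC l n m]
lemma key_sum (l n m : ℕ) :
    ∑ j ∈ range (n+1), ∑ k ∈ range (m+1),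
      (-1:ℝ)^(j+k) / (j.factorial * k.factorial * 2^(j+k)) * ((n+l).choose (n-j)) *
        ((m+l).choose (m-k)) * ((l+j+k).factorial)
    = (l+n+m).factorial / ((n.factorial : ℝ) * m.factorial * 2^(n+m)) := by
  have hdiv : ∀ N j : ℕ, j ≤ N → ((N+l).choose (N-j) : ℝ) / j.factorial
      = ((N.choose j) * (l+N).factorial) / (N.factorial * (l+j).factorial) := by
    intro N j hj
    have hc : (N.choose j : ℝ) * j.factorial * (l+N).factorial
        = N.factorial * ((l+N).choose (N-j) * (l+j).factorial) := by
      exact_mod_cast term2 l N j hj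
    rw [show N + l = l + N by omega, div_eq_div_iff (by positivity) (by positivity)]
    linear_combination -hc
  have hterm : ∀ j ∈ range (n+1), ∀ k ∈ range (m+1),
      (-1:ℝ)^(j+k) / (j.factorial * k.factorial * 2^(j+k)) * ((n+l).choose (n-j)) *
        ((m+l).choose (m-k)) * ((l+j+k).factorial)
      = ((l+n).factorial * (l+m).factorial / (n.factorial * m.factorial)) *
        ((-1:ℝ)^(j+k) * (2⁻¹)^(j+k) * (n.choose j) * (m.choose k) * ((l+j+k).factorial)
          / ((l+j).factorial * (l+k).factorial)) := by
    intro j hj k hk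
    simp only [Finset.mem_range] at hj hk
    calc (-1:ℝ)^(j+k) / (j.factorial * k.factorial * 2^(j+k)) * ((n+l).choose (n-j)) *
          ((m+l).choose (m-k)) * ((l+j+k).factorial)
        = (((n+l).choose (n-j) : ℝ) / j.factorial) * (((m+l).choose (m-k) : ℝ) / k.factorial) *
            ((-1:ℝ)^(j+k) * (2⁻¹)^(j+k) * ((l+j+k).factorial)) := by
          rw [inv_pow]
          ring
      _ = (((n.choose j) * (l+n).factorial) / (n.factorial * (l+j).factorial)) *
            ((((m.choose k) * (l+m).factorial)) / (m.factorial * (l+k).factorial)) *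
            ((-1:ℝ)^(j+k) * (2⁻¹)^(j+k) * ((l+j+k).factorial)) := by
          rw [hdiv n j (by omega), hdiv m k (by omega)]
      _ = ((l+n).factorial * (l+m).factorial / (n.factorial * m.factorial)) *
            ((-1:ℝ)^(j+k) * (2⁻¹)^(j+k) * (n.choose j) * (m.choose k) * ((l+j+k).factorial)
              / ((l+j).factorial * (l+k).factorial)) := by
          ring
  rw [Finset.sum_congr rfl (fun j hj => Finset.sum_congr rfl (hterm j hj))]
  simp only [← Finset.mul_sum]
  rw [keyA l n m]
  have h1 : ((l+n).factorial : ℝ) ≠ 0 := by positivity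
  have h2 : ((l+m).factorial : ℝ) ≠ 0 := by positivity
  have h3 : (n.factorial : ℝ) ≠ 0 := by positivity
  have h4 : (m.factorial : ℝ) ≠ 0 := by positivity
  field_simp
  simp only [one_div, inv_pow]
  field_simp
lemma gauss_congr (a : ℕ) : ∀ r ∈ Set.Ioi (0:ℝ),
    r ^ ((2*a+1 : ℕ) : ℝ) * Real.exp (-r ^ (2:ℝ)) = r ^ (2*a+1) * Real.exp (-r^2) := by
  intro r hr
  have hr' : (0:ℝ) ≤ r := le_of_lt hr
  rw [Real.rpow_natCast, show (2:ℝ) = ((2:ℕ):ℝ) by norm_num, Real.rpow_natCast]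
lemma gauss_integrable (a : ℕ) :
    IntegrableOn (fun r : ℝ => r ^ (2*a+1) * Real.exp (-r^2)) (Set.Ioi 0) := by
  have hs : (-1:ℝ) < ((2*a+1 : ℕ) : ℝ) := by
    push_cast
    have := Nat.cast_nonneg (α := ℝ) a
    linarith
  have h := integrableOn_rpow_mul_exp_neg_rpow (p := 2) (s := ((2*a+1 : ℕ) : ℝ)) hs two_pos
  exact h.congr_fun (gauss_congr a) measurableSet_Ioi
lemma gauss_moment (a : ℕ) :
    ∫ r in Set.Ioi (0:ℝ), r ^ (2*a+1) * Real.exp (-r^2) = a.factorial / 2 := by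
  rw [← MeasureTheory.setIntegral_congr_fun measurableSet_Ioi (gauss_congr a)]
  have hs : (-1:ℝ) < ((2*a+1 : ℕ) : ℝ) := by
    push_cast
    have := Nat.cast_nonneg (α := ℝ) a
    linarith
  rw [integral_rpow_mul_exp_neg_rpow (by norm_num) hs]
  have : (((2*a+1 : ℕ) : ℝ) + 1) / 2 = (a : ℝ) + 1 := by push_cast; ring
  rw [this, Real.Gamma_nat_eq_factorial]
  ring
lemma radial_eval (L n m : ℕ) :
    ∫ r in Set.Ioi (0:ℝ),
        (r^(2*L) * laguerre n L (r^2/2) * laguerre m L (r^2/2) * Real.exp (-r^2)) * r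
    = (L+n+m).factorial / ((n.factorial : ℝ) * m.factorial * 2^(n+m+1)) := by
  have hpt : ∀ r ∈ Set.Ioi (0:ℝ),
      (r^(2*L) * laguerre n L (r^2/2) * laguerre m L (r^2/2) * Real.exp (-r^2)) * r
      = ∑ j ∈ range (n+1), ∑ k ∈ range (m+1),
          ((-1:ℝ)^(j+k) / (j.factorial * k.factorial * 2^(j+k)) * ((n+L).choose (n-j)) *
            ((m+L).choose (m-k))) * (r^(2*(L+j+k)+1) * Real.exp (-r^2)) := by
    intro r _
    unfold laguerre
    simp only [Finset.mul_sum, Finset.sum_mul]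
    rw [Finset.sum_comm]
    apply Finset.sum_congr rfl
    intro j _
    apply Finset.sum_congr rfl
    intro k _
    have e1 : ∀ p:ℕ, (-(r^2/2))^p = (-1:ℝ)^p * ((r^2)^p) / 2^p := by
      intro p
      rw [neg_pow, div_pow]
      ring
    have e2 : r^(2*(L+j+k)+1) = r^(2*L) * (r^2)^j * (r^2)^k * r := by ring
    rw [e1 j, e1 k, e2]
    ring
  rw [MeasureTheory.setIntegral_congr_fun measurableSet_Ioi hpt]
  rw [MeasureTheory.integral_finset_sum]
  swap
  · intro j hj
    apply MeasureTheory.integrable_finset_sum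
    intro k hk
    exact (gauss_integrable (L+j+k)).const_mul _
  have hstep : ∀ j ∈ range (n+1),
      (∫ r in Set.Ioi (0:ℝ), ∑ k ∈ range (m+1),
          ((-1:ℝ)^(j+k) / (j.factorial * k.factorial * 2^(j+k)) * ((n+L).choose (n-j)) *
            ((m+L).choose (m-k))) * (r^(2*(L+j+k)+1) * Real.exp (-r^2)))
      = ∑ k ∈ range (m+1),
          ((-1:ℝ)^(j+k) / (j.factorial * k.factorial * 2^(j+k)) * ((n+L).choose (n-j)) *
            ((m+L).choose (m-k)) * ((L+j+k).factorial)) / 2 := by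
    intro j hj
    rw [MeasureTheory.integral_finset_sum]
    swap
    · intro k hk
      exact (gauss_integrable (L+j+k)).const_mul _
    apply Finset.sum_congr rfl
    intro k hk
    rw [MeasureTheory.integral_const_mul, gauss_moment]
    ring
  rw [Finset.sum_congr rfl hstep]
  simp only [← Finset.sum_div]
  rw [key_sum L n m]
  rw [pow_succ]
  ring
lemma lagZ_nat (n L : ℕ) (x : ℝ) : laguerreZ n (L : ℤ) x = laguerre n L x := by
  unfold laguerreZ
  rw [if_pos (Int.natCast_nonneg L), Int.toNat_natCast]
lemma toNat_add (n L : ℕ) : ((n : ℤ) + (L : ℤ)).toNat = n + L := by omega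

/-- S1: pointwise value of the inner product integrand, for nonnegative index. -/
lemma pointwise_prod (n m L : ℕ) (r Θ : ℝ) :
    (starRingEnd ℂ) (landauEig n (L:ℤ) r Θ) * ((Real.exp (-r^2/2) : ℝ) : ℂ) *
      landauEig m (L:ℤ) r Θ
    = (((((-1:ℝ)^n * Real.sqrt ((n.factorial : ℝ) / ((2:ℝ)^L * (n+L).factorial)) * r^L *
          laguerre n L (r^2/2) * (Real.exp (-r^2/4) / Real.sqrt (2*π))) * Real.exp (-r^2/2) *
        ((-1:ℝ)^m * Real.sqrt ((m.factorial : ℝ) / ((2:ℝ)^L * (m+L).factorial)) * r^L *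
          laguerre m L (r^2/2) * (Real.exp (-r^2/4) / Real.sqrt (2*π)))) : ℝ) : ℂ) := by
  unfold landauEig
  rw [lagZ_nat, lagZ_nat, toNat_add, toNat_add]
  rw [zpow_natCast, zpow_natCast]
  push_cast
  have habs : (starRingEnd ℂ) (Complex.exp (Complex.I * (Θ:ℂ) * (L:ℂ))) *
      Complex.exp (Complex.I * (Θ:ℂ) * (L:ℂ)) = 1 := by
    rw [← Complex.exp_conj, ← Complex.exp_add]
    have h0 : (starRingEnd ℂ) (Complex.I * (Θ:ℂ) * (L:ℂ)) + Complex.I * (Θ:ℂ) * (L:ℂ) = 0 := by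
      simp only [map_mul, Complex.conj_I, Complex.conj_ofReal, map_natCast]
      ring
    rw [h0, Complex.exp_zero]
  simp only [map_mul, map_pow, map_neg, map_one, Complex.conj_ofReal]
  have hre : (starRingEnd ℂ) (Complex.exp (-(r:ℂ)^2/4) / ((Real.sqrt (2*π) : ℝ) : ℂ))
      = Complex.exp (-(r:ℂ)^2/4) / ((Real.sqrt (2*π) : ℝ) : ℂ) := by
    rw [map_div₀, ← Complex.exp_conj, Complex.conj_ofReal]
    congr 2
    simp only [map_div₀, map_neg, map_pow, Complex.conj_ofReal, map_ofNat]
  rw [hre]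
  linear_combination ((-1:ℂ)^n * ((Real.sqrt ((n.factorial:ℝ) / (2^L * (n+L).factorial)) : ℝ) : ℂ) *
      ((r:ℂ))^L * ((laguerre n L (r^2/2) : ℝ) : ℂ) *
      (Complex.exp (-(r:ℂ)^2/4) / ((Real.sqrt (2*π) : ℝ) : ℂ)) * Complex.exp (-(r:ℂ)^2/2) *
      ((-1:ℂ)^m * ((Real.sqrt ((m.factorial:ℝ) / (2^L * (m+L).factorial)) : ℝ) : ℂ) *
      ((r:ℂ))^L * ((laguerre m L (r^2/2) : ℝ) : ℂ) *
      (Complex.exp (-(r:ℂ)^2/4) / ((Real.sqrt (2*π) : ℝ) : ℂ)))) * habs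
lemma final_alg (n m L : ℕ) :
    Real.sqrt ((n.factorial:ℝ)/((2:ℝ)^L*(n+L).factorial)) *
      Real.sqrt ((m.factorial:ℝ)/((2:ℝ)^L*(m+L).factorial)) *
      ((L+n+m).factorial / ((n.factorial:ℝ)*m.factorial*2^(n+m+1)))
    = ((L+m+n).factorial : ℝ) / (2^(L+m+n+1) *
        Real.sqrt (((L+m).factorial : ℝ) * (L+n).factorial * n.factorial * m.factorial)) := by
  have e1 : ∀ a b : ℕ, Real.sqrt ((a.factorial:ℝ)/((2:ℝ)^L*(a+b).factorial))
      = Real.sqrt (a.factorial) / (Real.sqrt ((2:ℝ)^L) * Real.sqrt ((a+b).factorial)) := by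
    intro a b
    rw [Real.sqrt_div (by positivity), Real.sqrt_mul (by positivity)]
  rw [e1, e1]
  have e2 : Real.sqrt (((L+m).factorial : ℝ) * (L+n).factorial * n.factorial * m.factorial)
      = Real.sqrt ((L+m).factorial) * Real.sqrt ((L+n).factorial) * Real.sqrt (n.factorial) *
        Real.sqrt (m.factorial) := by
    rw [Real.sqrt_mul (by positivity), Real.sqrt_mul (by positivity),
      Real.sqrt_mul (by positivity)]
  rw [e2, show n + L = L + n by omega, show m + L = L + m by omega,
    show L+m+n = L+n+m by omega, show L+n+m+1 = L+(n+m+1) by omega, pow_add]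
  have ha : Real.sqrt (n.factorial:ℝ) * Real.sqrt (n.factorial:ℝ) = n.factorial :=
    Real.mul_self_sqrt (by positivity)
  have hb : Real.sqrt (m.factorial:ℝ) * Real.sqrt (m.factorial:ℝ) = m.factorial :=
    Real.mul_self_sqrt (by positivity)
  have ht : Real.sqrt ((2:ℝ)^L) * Real.sqrt ((2:ℝ)^L) = (2:ℝ)^L :=
    Real.mul_self_sqrt (by positivity)
  have h1 : Real.sqrt (n.factorial:ℝ) ≠ 0 := by positivity
  have h2 : Real.sqrt (m.factorial:ℝ) ≠ 0 := by positivity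
  have h3 : Real.sqrt ((2:ℝ)^L) ≠ 0 := by positivity
  have h4 : Real.sqrt (((L+n).factorial:ℝ)) ≠ 0 := by positivity
  have h5 : Real.sqrt (((L+m).factorial:ℝ)) ≠ 0 := by positivity
  have h6 : ((n.factorial:ℝ)) ≠ 0 := by positivity
  have h7 : ((m.factorial:ℝ)) ≠ 0 := by positivity
  field_simp
  linear_combination
    ((2:ℝ)^n * 2^m * 2 * (2:ℝ)^L * (Real.sqrt (n.factorial) * Real.sqrt (n.factorial))) * hb
    + ((2:ℝ)^n * 2^m * 2 * (2:ℝ)^L * (m.factorial : ℝ)) * ha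
    - ((2:ℝ)^n * 2^m * 2 * (n.factorial : ℝ) * (m.factorial : ℝ)) * ht
lemma main_pos (n m L : ℕ) :
    ‖(∫ r in Set.Ioi (0:ℝ), (∫ Θ in (0:ℝ)..(2*π),
        (starRingEnd ℂ) (landauEig n (L:ℤ) r Θ) * ((Real.exp (-r^2/2) : ℝ) : ℂ) *
          landauEig m (L:ℤ) r Θ) * (r:ℂ))‖
    = ((L+m+n).factorial : ℝ) / (2^(L+m+n+1) *
        Real.sqrt (((L+m).factorial : ℝ) * (L+n).factorial * n.factorial * m.factorial)) := by
  set G : ℝ → ℝ := fun r =>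
    (((-1:ℝ)^n * Real.sqrt ((n.factorial : ℝ) / ((2:ℝ)^L * (n+L).factorial)) * r^L *
        laguerre n L (r^2/2) * (Real.exp (-r^2/4) / Real.sqrt (2*π))) * Real.exp (-r^2/2) *
      ((-1:ℝ)^m * Real.sqrt ((m.factorial : ℝ) / ((2:ℝ)^L * (m+L).factorial)) * r^L *
        laguerre m L (r^2/2) * (Real.exp (-r^2/4) / Real.sqrt (2*π)))) with hG
  have hinner : ∀ r : ℝ, (∫ Θ in (0:ℝ)..(2*π),
      (starRingEnd ℂ) (landauEig n (L:ℤ) r Θ) * ((Real.exp (-r^2/2) : ℝ) : ℂ) *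
        landauEig m (L:ℤ) r Θ) * (r:ℂ) = (((2*π * G r) * r : ℝ) : ℂ) := by
    intro r
    have : (∫ Θ in (0:ℝ)..(2*π),
        (starRingEnd ℂ) (landauEig n (L:ℤ) r Θ) * ((Real.exp (-r^2/2) : ℝ) : ℂ) *
          landauEig m (L:ℤ) r Θ) = ∫ Θ in (0:ℝ)..(2*π), ((G r : ℝ) : ℂ) := by
      apply intervalIntegral.integral_congr
      intro Θ _
      exact pointwise_prod n m L r Θ
    rw [this, intervalIntegral.integral_const, sub_zero, Complex.real_smul,
      ← Complex.ofReal_mul, ← Complex.ofReal_mul]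
  rw [MeasureTheory.setIntegral_congr_fun measurableSet_Ioi (fun r _ => hinner r)]
  have hofr : (∫ x in Set.Ioi (0:ℝ), ((2*π * G x * x : ℝ) : ℂ))
      = ((∫ x in Set.Ioi (0:ℝ), 2*π * G x * x : ℝ) : ℂ) := integral_ofReal
  rw [hofr, Complex.norm_real, Real.norm_eq_abs]
  have hptw : ∀ r ∈ Set.Ioi (0:ℝ), (2*π * G r) * r
      = ((-1:ℝ)^(n+m) * Real.sqrt ((n.factorial : ℝ) / ((2:ℝ)^L * (n+L).factorial)) *
          Real.sqrt ((m.factorial : ℝ) / ((2:ℝ)^L * (m+L).factorial))) *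
        ((r^(2*L) * laguerre n L (r^2/2) * laguerre m L (r^2/2) * Real.exp (-r^2)) * r) := by
    intro r _
    rw [hG]
    have hsq : Real.sqrt (2*π) * Real.sqrt (2*π) = 2*π := Real.mul_self_sqrt (by positivity)
    have hexp : Real.exp (-r^2/4) * Real.exp (-r^2/4) * Real.exp (-r^2/2) = Real.exp (-r^2) := by
      rw [← Real.exp_add, ← Real.exp_add]
      ring_nf
    have hπ : Real.sqrt (2*π) ≠ 0 := by positivity
    calc 2*π * ((((-1:ℝ)^n * Real.sqrt ((n.factorial : ℝ) / ((2:ℝ)^L * (n+L).factorial)) * r^L *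
            laguerre n L (r^2/2) * (Real.exp (-r^2/4) / Real.sqrt (2*π))) * Real.exp (-r^2/2) *
          ((-1:ℝ)^m * Real.sqrt ((m.factorial : ℝ) / ((2:ℝ)^L * (m+L).factorial)) * r^L *
            laguerre m L (r^2/2) * (Real.exp (-r^2/4) / Real.sqrt (2*π))))) * r
        = (2*π/(Real.sqrt (2*π) * Real.sqrt (2*π))) *
            (((-1:ℝ)^n * (-1)^m) * Real.sqrt ((n.factorial : ℝ) / ((2:ℝ)^L * (n+L).factorial)) *
            Real.sqrt ((m.factorial : ℝ) / ((2:ℝ)^L * (m+L).factorial)) *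
            ((r^L * r^L) * laguerre n L (r^2/2) * laguerre m L (r^2/2) *
              (Real.exp (-r^2/4) * Real.exp (-r^2/4) * Real.exp (-r^2/2)) * r)) := by
          field_simp
      _ = _ := by
          rw [hsq, hexp, div_self (by positivity : (2*π:ℝ) ≠ 0), one_mul,
            show 2*L = L + L by omega, pow_add]
          ring
  rw [MeasureTheory.setIntegral_congr_fun measurableSet_Ioi hptw, MeasureTheory.integral_const_mul,
    radial_eval]
  rw [abs_mul, abs_mul, abs_mul, abs_pow, abs_neg, abs_one, one_pow, one_mul,
    abs_of_nonneg (Real.sqrt_nonneg _), abs_of_nonneg (Real.sqrt_nonneg _),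
    abs_of_nonneg (by positivity : (0:ℝ) ≤ (L+n+m).factorial / ((n.factorial:ℝ)*m.factorial*2^(n+m+1)))]
  exact final_alg n m L
lemma lagZ_neg (n p : ℕ) (hp : 0 < p) (hn : p ≤ n) (x : ℝ) :
    laguerreZ n (-(p:ℤ)) x
      = ((n-p).factorial : ℝ) / n.factorial * (-x)^p * laguerre (n-p) p x := by
  unfold laguerreZ
  rw [if_neg (by omega), show ((n:ℤ) + -(p:ℤ)).toNat = n - p by omega,
    show (-(p:ℤ)).natAbs = p by omega]
lemma side_neg (p N : ℕ) (hp : 0 < p) (hN : p ≤ N) (r E4 : ℝ) (hr : r ≠ 0) :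
    (-1:ℝ)^N * Real.sqrt ((N.factorial:ℝ)/(((2:ℝ)^p)⁻¹ * (N-p).factorial)) * ((r^p)⁻¹) *
      (((N-p).factorial : ℝ)/N.factorial * (-(r^2/2))^p * laguerre (N-p) p (r^2/2)) * E4
    = (-1:ℝ)^(N-p) * Real.sqrt (((N-p).factorial:ℝ)/((2:ℝ)^p * ((N-p)+p).factorial)) * r^p *
        laguerre (N-p) p (r^2/2) * E4 := by
  rw [show (N-p)+p = N by omega]
  set A := Real.sqrt ((N.factorial:ℝ)/(((2:ℝ)^p)⁻¹ * (N-p).factorial)) with hA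
  set B := Real.sqrt (((N-p).factorial:ℝ)/((2:ℝ)^p * N.factorial)) with hB
  have hBpos : 0 < B := Real.sqrt_pos.mpr (by positivity)
  have hAB : A * B = 1 := by
    rw [hA, hB, ← Real.sqrt_mul (by positivity)]
    have hone : (N.factorial:ℝ)/(((2:ℝ)^p)⁻¹ * (N-p).factorial) *
        (((N-p).factorial:ℝ)/((2:ℝ)^p * N.factorial)) = 1 := by
      field_simp
    rw [hone]
    exact Real.sqrt_one
  have hBsq : B * B = ((N-p).factorial:ℝ)/((2:ℝ)^p * N.factorial) :=
    Real.mul_self_sqrt (by positivity)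
  have hkey : A * (((N-p).factorial : ℝ)/N.factorial) = 2^p * B := by
    apply mul_right_cancel₀ (ne_of_gt hBpos)
    calc A * (((N-p).factorial : ℝ)/N.factorial) * B
        = (((N-p).factorial : ℝ)/N.factorial) * (A * B) := by ring
      _ = (((N-p).factorial : ℝ)/N.factorial) := by rw [hAB, mul_one]
      _ = 2^p * (B * B) := by
          rw [hBsq]
          field_simp
      _ = 2^p * B * B := by ring
  have hpow : (-(r^2/2))^p = (-1:ℝ)^p * (r^p * r^p) / 2^p := by
    rw [neg_pow, div_pow, ← pow_mul, show 2*p = p + p by omega, pow_add]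
    ring
  have hsign : (-1:ℝ)^(N-p) * (-1)^p = (-1)^N := by
    rw [← pow_add, show N-p+p = N by omega]
  calc (-1:ℝ)^N * A * ((r^p)⁻¹) *
        (((N-p).factorial : ℝ)/N.factorial * (-(r^2/2))^p * laguerre (N-p) p (r^2/2)) * E4
      = (-1:ℝ)^N * (-1)^p * (A * (((N-p).factorial : ℝ)/N.factorial)) *
          ((r^p)⁻¹ * (r^p * r^p) / 2^p) * laguerre (N-p) p (r^2/2) * E4 := by
        rw [hpow]
        ring
    _ = (-1:ℝ)^N * (-1)^p * (2^p * B) * (r^p / 2^p) * laguerre (N-p) p (r^2/2) * E4 := by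
        rw [hkey]
        congr 2
        have : (r:ℝ)^p ≠ 0 := pow_ne_zero _ hr
        field_simp
    _ = ((-1:ℝ)^(N-p) * ((-1)^p * (-1)^p)) * B * r^p * laguerre (N-p) p (r^2/2) * E4 := by
        rw [← hsign]
        have h2 : ((2:ℝ)^p) ≠ 0 := by positivity
        field_simp
    _ = _ := by
        have : ((-1:ℝ)^p * (-1)^p) = 1 := by
          rw [← pow_add, ← two_mul, pow_mul]
          norm_num
        rw [this, mul_one]
lemma pointwise_prod_neg (n m p : ℕ) (hp : 0 < p) (hn : p ≤ n) (hm : p ≤ m) (r Θ : ℝ)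
    (hr : r ≠ 0) :
    (starRingEnd ℂ) (landauEig n (-(p:ℤ)) r Θ) * ((Real.exp (-r^2/2) : ℝ) : ℂ) *
      landauEig m (-(p:ℤ)) r Θ
    = (starRingEnd ℂ) (landauEig (n-p) (p:ℤ) r Θ) * ((Real.exp (-r^2/2) : ℝ) : ℂ) *
      landauEig (m-p) (p:ℤ) r Θ := by
  rw [pointwise_prod (n-p) (m-p) p r Θ]
  have hlhs : (starRingEnd ℂ) (landauEig n (-(p:ℤ)) r Θ) * ((Real.exp (-r^2/2) : ℝ) : ℂ) *
      landauEig m (-(p:ℤ)) r Θ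
      = (((((-1:ℝ)^n * Real.sqrt ((n.factorial:ℝ)/(((2:ℝ)^p)⁻¹ * (n-p).factorial)) * ((r^p)⁻¹) *
            (((n-p).factorial : ℝ)/n.factorial * (-(r^2/2))^p * laguerre (n-p) p (r^2/2)) *
            (Real.exp (-r^2/4) / Real.sqrt (2*π))) * Real.exp (-r^2/2) *
          ((-1:ℝ)^m * Real.sqrt ((m.factorial:ℝ)/(((2:ℝ)^p)⁻¹ * (m-p).factorial)) * ((r^p)⁻¹) *
            (((m-p).factorial : ℝ)/m.factorial * (-(r^2/2))^p * laguerre (m-p) p (r^2/2)) *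
            (Real.exp (-r^2/4) / Real.sqrt (2*π)))) : ℝ) : ℂ) := by
    unfold landauEig
    rw [lagZ_neg n p hp hn, lagZ_neg m p hp hm,
      show ((n:ℤ) + -(p:ℤ)).toNat = n - p by omega,
      show ((m:ℤ) + -(p:ℤ)).toNat = m - p by omega,
      show (2:ℝ)^(-(p:ℤ)) = ((2:ℝ)^p)⁻¹ by rw [zpow_neg, zpow_natCast],
      show r^(-(p:ℤ)) = (r^p)⁻¹ by rw [zpow_neg, zpow_natCast]]
    push_cast
    have habs : (starRingEnd ℂ) (Complex.exp (Complex.I * (Θ:ℂ) * -(p:ℂ))) *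
        Complex.exp (Complex.I * (Θ:ℂ) * -(p:ℂ)) = 1 := by
      rw [← Complex.exp_conj, ← Complex.exp_add]
      have h0 : (starRingEnd ℂ) (Complex.I * (Θ:ℂ) * -(p:ℂ)) +
          Complex.I * (Θ:ℂ) * -(p:ℂ) = 0 := by
        simp only [map_mul, map_neg, Complex.conj_I, Complex.conj_ofReal, map_natCast]
        ring
      rw [h0, Complex.exp_zero]
    simp only [map_mul, map_pow, map_neg, map_one, Complex.conj_ofReal, map_inv₀, map_div₀,
      map_ofNat, map_natCast]
    have hre : (starRingEnd ℂ) (Complex.exp (-(r:ℂ)^2/4)) = Complex.exp (-(r:ℂ)^2/4) := by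
      rw [← Complex.exp_conj]
      congr 1
      simp only [map_div₀, map_neg, map_pow, Complex.conj_ofReal, map_ofNat]
    rw [hre]
    linear_combination ((-1:ℂ)^n *
        ((Real.sqrt ((n.factorial:ℝ)/(((2:ℝ)^p)⁻¹ * (n-p).factorial)) : ℝ) : ℂ) *
        (((r:ℂ))^p)⁻¹ * (((n-p).factorial : ℂ)/(n.factorial : ℂ) * (-((r:ℂ)^2/2))^p *
          ((laguerre (n-p) p (r^2/2) : ℝ) : ℂ)) *
        (Complex.exp (-(r:ℂ)^2/4) / ((Real.sqrt (2*π) : ℝ) : ℂ)) * Complex.exp (-(r:ℂ)^2/2) *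
        ((-1:ℂ)^m *
        ((Real.sqrt ((m.factorial:ℝ)/(((2:ℝ)^p)⁻¹ * (m-p).factorial)) : ℝ) : ℂ) *
        (((r:ℂ))^p)⁻¹ * (((m-p).factorial : ℂ)/(m.factorial : ℂ) * (-((r:ℂ)^2/2))^p *
          ((laguerre (m-p) p (r^2/2) : ℝ) : ℂ)) *
        (Complex.exp (-(r:ℂ)^2/4) / ((Real.sqrt (2*π) : ℝ) : ℂ)))) * habs
  rw [hlhs]
  congr 1
  rw [side_neg p n hp hn r _ hr, side_neg p m hp hm r _ hr]

/-- For `n, m ∈ ℕ₀` and `l ≥ −min(n,m)`, the matrix element of the Gaussian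
`g(q) = e^{−|q|²/2}` between Landau eigenfunctions (inner product in
`L²(ℝ², r dr dΘ)`, written in polar coordinates) satisfies
`|⟨ψ_{n,l}, g ψ_{m,l}⟩| = (1/2^{l+m+n+1}) (l+m+n)!/√((l+m)!(l+n)! n! m!)`. -/
theorem gaussian_matrix_element (n m : ℕ) (l : ℤ) (hl : -(min n m : ℤ) ≤ l) :
    ‖(∫ r in Set.Ioi (0 : ℝ),
        (∫ Θ in (0 : ℝ)..(2 * π),
          (starRingEnd ℂ) (landauEig n l r Θ) *
            ((Real.exp (-r ^ 2 / 2) : ℝ) : ℂ) * landauEig m l r Θ) * (r : ℂ))‖ =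
      ((l + m + n).toNat.factorial : ℝ) / (2 ^ ((l + m + n).toNat + 1) *
        Real.sqrt (((l + m).toNat.factorial : ℝ) * (l + n).toNat.factorial *
          n.factorial * m.factorial)) := by
  rcases le_or_gt 0 l with h0 | h0
  · lift l to ℕ using h0 with L
    rw [show ((L:ℤ) + m + n).toNat = L + m + n by omega,
      show ((L:ℤ) + m).toNat = L + m by omega,
      show ((L:ℤ) + n).toNat = L + n by omega]
    exact main_pos n m L
  · set p := l.natAbs with hpdef
    have hlp : l = -(p:ℤ) := by omega
    have hp : 0 < p := by omega
    have hn : p ≤ n := by omega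
    have hm : p ≤ m := by omega
    rw [hlp]
    have hint : ∀ r ∈ Set.Ioi (0:ℝ),
        (∫ Θ in (0:ℝ)..(2*π),
          (starRingEnd ℂ) (landauEig n (-(p:ℤ)) r Θ) * ((Real.exp (-r^2/2) : ℝ) : ℂ) *
            landauEig m (-(p:ℤ)) r Θ) * (r:ℂ)
        = (∫ Θ in (0:ℝ)..(2*π),
          (starRingEnd ℂ) (landauEig (n-p) (p:ℤ) r Θ) * ((Real.exp (-r^2/2) : ℝ) : ℂ) *
            landauEig (m-p) (p:ℤ) r Θ) * (r:ℂ) := by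
      intro r hr
      have hr' : r ≠ 0 := ne_of_gt hr
      congr 1
      apply intervalIntegral.integral_congr
      intro Θ _
      exact pointwise_prod_neg n m p hp hn hm r Θ hr'
    rw [MeasureTheory.setIntegral_congr_fun measurableSet_Ioi hint]
    rw [show (-(p:ℤ) + m + n).toNat = p + (m-p) + (n-p) by omega,
      show (-(p:ℤ) + m).toNat = m - p by omega,
      show (-(p:ℤ) + n).toNat = n - p by omega]
    rw [main_pos (n-p) (m-p) p]
    rw [show p + (m-p) = m by omega, show p + (n-p) = n by omega,
      show ((m-p).factorial:ℝ) * ((n-p).factorial) * n.factorial * m.factorial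
        = (m.factorial:ℝ) * n.factorial * ((n-p).factorial) * ((m-p).factorial) by ring]
end

section
/- The function q ↦ e^{ik·q} on ℝ² (for k ∈ ℝ², k possibly nonzero) cannot be written as g ∗ μ for any finite (complex) Borel measure μ on ℝ², where g(q) = e^{−|q|²/2}. -/
open Real MeasureTheory Filter

lemma conv_tendsto (μ : Measure (ℝ × ℝ)) [IsFiniteMeasure μ] :
    Tendsto (fun n : ℝ => ∫ p : ℝ × ℝ, Real.exp (-((n - p.1) ^ 2 + (0 - p.2) ^ 2) / 2) ∂μ)
      atTop (nhds 0) := by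
  have key := tendsto_integral_filter_of_dominated_convergence (μ := μ) (l := atTop)
    (F := fun (n : ℝ) (p : ℝ × ℝ) => Real.exp (-((n - p.1) ^ 2 + (0 - p.2) ^ 2) / 2))
    (f := fun _ => (0:ℝ)) (fun _ => (1:ℝ)) ?_ ?_ ?_ ?_
  · simpa using key
  · exact Eventually.of_forall fun n => (Continuous.aestronglyMeasurable (by continuity))
  · refine Eventually.of_forall fun n => Eventually.of_forall fun p => ?_
    rw [Real.norm_eq_abs, abs_of_pos (Real.exp_pos _)]
    exact Real.exp_le_one_iff.mpr (by nlinarith [sq_nonneg (n - p.1), sq_nonneg (0 - p.2)])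
  · exact integrable_const 1
  · refine Eventually.of_forall fun p => ?_
    have htop : Tendsto (fun n : ℝ => (n - p.1) ^ 2) atTop atTop :=
      (tendsto_pow_atTop two_ne_zero).comp (tendsto_atTop_add_const_right _ _ tendsto_id)
    have h1 : Tendsto (fun n : ℝ => -((n - p.1) ^ 2 + (0 - p.2) ^ 2) / 2) atTop atBot := by
      apply Tendsto.atBot_div_const (by norm_num : (0:ℝ) < 2)
      exact tendsto_neg_atBot_iff.mpr (tendsto_atTop_add_const_right _ _ htop)
    exact Real.tendsto_exp_atBot.comp h1


/-- The plane wave `q ↦ e^{ik·q}` on `ℝ²` (for fixed `k ≠ 0`) is not the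
convolution `g ∗ μ` of the Gaussian `g(q) = e^{−|q|²/2}` with any finite complex
Borel measure `μ`; a finite complex measure is encoded by its Jordan decomposition
`μ = (μ₁ − μ₂) + i(μ₃ − μ₄)` into four finite (nonnegative) measures. -/
theorem plane_wave_not_gaussian_convolution (k : ℝ × ℝ) (hk : k ≠ 0) :
    ¬ ∃ μ₁ μ₂ μ₃ μ₄ : Measure (ℝ × ℝ),
      IsFiniteMeasure μ₁ ∧ IsFiniteMeasure μ₂ ∧ IsFiniteMeasure μ₃ ∧
      IsFiniteMeasure μ₄ ∧
      ∀ q : ℝ × ℝ,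
        Complex.exp (Complex.I * ((k.1 * q.1 + k.2 * q.2 : ℝ) : ℂ)) =
          (((∫ p, Real.exp (-((q.1 - p.1) ^ 2 + (q.2 - p.2) ^ 2) / 2) ∂μ₁) -
              (∫ p, Real.exp (-((q.1 - p.1) ^ 2 + (q.2 - p.2) ^ 2) / 2) ∂μ₂) : ℝ) : ℂ) +
            Complex.I *
              (((∫ p, Real.exp (-((q.1 - p.1) ^ 2 + (q.2 - p.2) ^ 2) / 2) ∂μ₃) -
                  (∫ p, Real.exp (-((q.1 - p.1) ^ 2 + (q.2 - p.2) ^ 2) / 2) ∂μ₄) : ℝ) : ℂ) := by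
  rintro ⟨μ₁, μ₂, μ₃, μ₄, h₁, h₂, h₃, h₄, h⟩
  set F : ℝ → Measure (ℝ × ℝ) → ℝ := fun n μ =>
    ∫ p : ℝ × ℝ, Real.exp (-((n - p.1) ^ 2 + (0 - p.2) ^ 2) / 2) ∂μ with hF
  have t1 := conv_tendsto μ₁
  have t2 := conv_tendsto μ₂
  have t3 := conv_tendsto μ₃
  have t4 := conv_tendsto μ₄
  have habs : ∀ n : ℝ, ‖
      ((((F n μ₁ - F n μ₂ : ℝ)) : ℂ) + Complex.I * ((F n μ₃ - F n μ₄ : ℝ) : ℂ))‖ = 1 := by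
    intro n
    have := h (n, 0)
    simp only [hF]
    rw [← this, Complex.norm_exp]
    have : (Complex.I * ((k.1 * n + k.2 * 0 : ℝ) : ℂ)).re = 0 := by simp
    rw [this, Real.exp_zero]
  have hzero : Tendsto (fun n : ℝ => ‖
      ((((F n μ₁ - F n μ₂ : ℝ)) : ℂ) + Complex.I * ((F n μ₃ - F n μ₄ : ℝ) : ℂ))‖)
      atTop (nhds 0) := by
    have hc : Tendsto (fun n : ℝ =>
        (((F n μ₁ - F n μ₂ : ℝ)) : ℂ) + Complex.I * ((F n μ₃ - F n μ₄ : ℝ) : ℂ))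
        atTop (nhds 0) := by
      have h12 : Tendsto (fun n => F n μ₁ - F n μ₂) atTop (nhds 0) := by
        simpa only [hF, sub_zero] using t1.sub t2
      have h34 : Tendsto (fun n => F n μ₃ - F n μ₄) atTop (nhds 0) := by
        simpa only [hF, sub_zero] using t3.sub t4
      have := ((Complex.continuous_ofReal.tendsto 0).comp h12).add
        ((tendsto_const_nhds (x := Complex.I)).mul
          ((Complex.continuous_ofReal.tendsto 0).comp h34))
      simpa using this
    simpa using hc.norm
  have : Tendsto (fun _ : ℝ => (1:ℝ)) atTop (nhds 0) := by
    simpa only [habs] using hzero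
  exact zero_ne_one (tendsto_nhds_unique this tendsto_const_nhds)
end
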